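/- arXiv:2209.14476 — 5 statements merged into one kernel-verified Lean document; each statement's English description precedes it below -/
import Mathlib

section
/- For the fan graph F_{n-1} = K_1 ⊕ P_{n-1} (the join of a single vertex with a path on n-1 vertices), where n ≥ 5, the general position number equals ⌊2n/3⌋. -/
open SimpleGraph

/-- A general position set: no vertex of `S` lies on a geodesic between two
other vertices of `S`. -/
def IsGPSet {V : Type*} (G : SimpleGraph V) (S : Set V) : Prop :=
  ∀ ⦃u v w : V⦄, u ∈ S → v ∈ S → w ∈ S → u ≠ v → v ≠ w → u ≠ w →
    G.dist u w ≠ G.dist u v + G.dist v w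

/-- The general position number of a graph. -/
noncomputable def gpNumber {V : Type*} (G : SimpleGraph V) : ℕ :=
  sSup {k | ∃ S : Set V, IsGPSet G S ∧ S.ncard = k}

/-- Degree of a vertex (as the cardinality of its neighborhood). -/
noncomputable def degSet {V : Type*} (G : SimpleGraph V) (v : V) : ℕ :=
  (G.neighborSet v).ncard

/-- Maximum degree of a graph on `Fin n`. -/
noncomputable def maxDeg {n : ℕ} (G : SimpleGraph (Fin n)) : ℕ :=
  Finset.univ.sup (fun v => degSet G v)

/-- `x` lies strictly (clockwise) between `a` and `b` on the cycle `Fin n`. -/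
def StrictBtw {n : ℕ} (a x b : Fin n) : Prop :=
  0 < (x - a).val ∧ (x - a).val < (b - a).val

/-- Chords `ab` and `cd` of the cycle `Fin n` cross each other. -/
def Crossing {n : ℕ} (a b c d : Fin n) : Prop :=
  StrictBtw a c b ∧ StrictBtw b d a

/-- `G` is a maximal outerplanar (outerplane) graph, presented with its unique
Hamiltonian cycle `0, 1, …, n-1`: all chords are pairwise non-crossing, and no
further non-crossing chord can be added (a triangulation of an `n`-gon). -/
def IsMOPFin (n : ℕ) [NeZero n] (G : SimpleGraph (Fin n)) : Prop :=
  3 ≤ n ∧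
  (∀ i : Fin n, G.Adj i (i + 1)) ∧
  (∀ a b c d : Fin n, G.Adj a b → G.Adj c d → ¬ Crossing a b c d) ∧
  (∀ a b : Fin n, a ≠ b → ¬ G.Adj a b → ∃ c d : Fin n, G.Adj c d ∧ Crossing a b c d)

/-- The internal triangles of a maximal outerplane graph on `Fin n`:
triangles none of whose edges lies on the Hamiltonian cycle. -/
def InternalTriangles (n : ℕ) [NeZero n] (G : SimpleGraph (Fin n)) : Set (Finset (Fin n)) :=
  {T | T.card = 3 ∧ (∀ a ∈ T, ∀ b ∈ T, a ≠ b → G.Adj a b) ∧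
    ∀ a ∈ T, ∀ b ∈ T, b ≠ a + 1}

/-- The fan graph `F_m = K₁ ⊕ P_m`: the join of the central vertex `none`
with a path on `m` vertices. -/
def fanGraph (m : ℕ) : SimpleGraph (Option (Fin m)) where
  Adj x y :=
    match x, y with
    | none, none => False
    | none, some _ => True
    | some _, none => True
    | some i, some j => i.val + 1 = j.val ∨ j.val + 1 = i.val
  symm := by
    constructor
    intro x y h
    cases x <;> cases y <;> simp_all <;> omega
  loopless := by
    constructor
    intro x h
    cases x <;> simp_all

/-- The straight linear 2-tree: `vᵢ ~ vⱼ` iff `0 < |i - j| ≤ 2`. -/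
def linear2Tree (n : ℕ) : SimpleGraph (Fin n) where
  Adj i j := i ≠ j ∧ i.val ≤ j.val + 2 ∧ j.val ≤ i.val + 2
  symm := by
    constructor
    intro i j h
    exact ⟨h.1.symm, h.2.2, h.2.1⟩
  loopless := by
    constructor
    intro i h
    exact h.1 rfl

/-- The generalized sunflower graph built from a base graph `G0` on the cycle
`h_0 … h_{m-1}` by attaching `x` new vertices `v_0, …, v_{x-1}`,
where `v_i` is joined to `h_i` and `h_{(i+1) mod m}`. -/
def GSF (m x : ℕ) (G0 : SimpleGraph (Fin m)) : SimpleGraph (Fin m ⊕ Fin x) where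
  Adj a b :=
    match a, b with
    | .inl u, .inl v => G0.Adj u v
    | .inl u, .inr i => u.val = i.val ∨ u.val = (i.val + 1) % m
    | .inr i, .inl u => u.val = i.val ∨ u.val = (i.val + 1) % m
    | .inr _, .inr _ => False
  symm := by
    constructor
    intro a b h
    cases a <;> cases b <;> simp_all [SimpleGraph.adj_comm]
  loopless := by
    constructor
    intro a h
    cases a <;> simp_all

/-- `G` contains `K₄` as a minor: there exist four nonempty, pairwise disjoint,
connected branch sets that are pairwise joined by an edge. -/
def HasK4Minor {V : Type*} (G : SimpleGraph V) : Prop :=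
  ∃ B : Fin 4 → Set V,
    (∀ i, (B i).Nonempty) ∧
    (∀ i, (G.induce (B i)).Connected) ∧
    (∀ i j, i ≠ j → Disjoint (B i) (B j)) ∧
    (∀ i j, i ≠ j → ∃ a ∈ B i, ∃ b ∈ B j, G.Adj a b)


section FanAux

lemma fan_adj_some_none {m : ℕ} (i : Fin m) : (fanGraph m).Adj (some i) none := trivial
lemma fan_adj_none_some {m : ℕ} (i : Fin m) : (fanGraph m).Adj none (some i) := trivial
lemma fan_adj_some_some {m : ℕ} (i j : Fin m) :
    (fanGraph m).Adj (some i) (some j) ↔ (i.val + 1 = j.val ∨ j.val + 1 = i.val) := Iff.rfl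

lemma fan_dist_two {m : ℕ} {x y : Option (Fin m)} (h : x ≠ y)
    (hadj : ¬ (fanGraph m).Adj x y) : (fanGraph m).dist x y = 2 := by
  obtain ⟨i, rfl⟩ : ∃ i, x = some i := by
    cases x with
    | none =>
      exfalso
      cases y with
      | none => exact h rfl
      | some j => exact hadj (fan_adj_none_some j)
    | some i => exact ⟨i, rfl⟩
  obtain ⟨j, rfl⟩ : ∃ j, y = some j := by
    cases y with
    | none => exact absurd (fan_adj_some_none i) hadj
    | some j => exact ⟨j, rfl⟩
  have w : (fanGraph m).Walk (some i) (some j) :=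
    .cons (fan_adj_some_none i) (.cons (fan_adj_none_some j) .nil)
  have h2 : (fanGraph m).dist (some i) (some j) ≤ 2 := by
    simpa using dist_le
      (SimpleGraph.Walk.cons (fan_adj_some_none i)
        (SimpleGraph.Walk.cons (fan_adj_none_some j) SimpleGraph.Walk.nil))
  have h0 : (fanGraph m).dist (some i) (some j) ≠ 0 := by
    rw [Ne, dist_eq_zero_iff_eq_or_not_reachable]
    push_neg
    exact ⟨h, ⟨w⟩⟩
  have h1 : (fanGraph m).dist (some i) (some j) ≠ 1 :=
    fun hh => hadj (dist_eq_one_iff_adj.mp hh)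
  omega

lemma fan_gp_iff {m : ℕ} (S : Set (Option (Fin m))) :
    IsGPSet (fanGraph m) S ↔ ∀ ⦃u v w : Option (Fin m)⦄, u ∈ S → v ∈ S → w ∈ S →
      u ≠ v → v ≠ w → u ≠ w → (fanGraph m).Adj u v → (fanGraph m).Adj v w →
      (fanGraph m).Adj u w := by
  constructor
  · intro H u v w hu hv hw h1 h2 h3 a1 a2
    by_contra hna
    exact H hu hv hw h1 h2 h3 (by
      rw [fan_dist_two h3 hna, dist_eq_one_iff_adj.mpr a1, dist_eq_one_iff_adj.mpr a2])
  · intro H u v w hu hv hw h1 h2 h3 heq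
    have hval : ∀ (a b : Option (Fin m)), a ≠ b →
        ((fanGraph m).Adj a b ∧ (fanGraph m).dist a b = 1) ∨
        (¬ (fanGraph m).Adj a b ∧ (fanGraph m).dist a b = 2) := by
      intro a b hab
      by_cases h : (fanGraph m).Adj a b
      · exact Or.inl ⟨h, dist_eq_one_iff_adj.mpr h⟩
      · exact Or.inr ⟨h, fan_dist_two hab h⟩
    rcases hval u v h1 with ⟨hB, eB⟩ | ⟨hB, eB⟩ <;>
      rcases hval v w h2 with ⟨hC, eC⟩ | ⟨hC, eC⟩ <;>
      rcases hval u w h3 with ⟨hA, eA⟩ | ⟨hA, eA⟩ <;>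
      rw [eA, eB, eC] at heq <;>
      first
        | omega
        | exact hA (H hu hv hw h1 h2 h3 hB hC)

lemma no3_card : ∀ (m : ℕ) (S : Finset ℕ), (∀ x ∈ S, x < m) →
    (∀ x, x ∈ S → x + 1 ∈ S → x + 2 ∈ S → False) → S.card ≤ (2 * m + 2) / 3 := by
  intro m
  induction m using Nat.strong_induction_on with
  | _ m ih =>
    intro S hlt h3
    rcases le_or_gt m 2 with hm | hm
    · have hsub : S ⊆ Finset.range m := fun x hx => Finset.mem_range.mpr (hlt x hx)
      have := Finset.card_le_card hsub
      rw [Finset.card_range] at this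
      omega
    · have hTR := Finset.card_filter_add_card_filter_not
        (s := S) (p := fun x => x < m - 3)
      have hT : (S.filter (fun x => x < m - 3)).card ≤ (2 * (m - 3) + 2) / 3 := by
        refine ih (m - 3) (by omega) _ (fun x hx => (Finset.mem_filter.mp hx).2) ?_
        intro x hx hx1 hx2
        exact h3 x (Finset.mem_filter.mp hx).1 (Finset.mem_filter.mp hx1).1
          (Finset.mem_filter.mp hx2).1
      have hR : (S.filter (fun x => ¬ x < m - 3)).card ≤ 2 := by
        by_contra hc
        rw [not_le] at hc
        have hsub : (S.filter (fun x => ¬ x < m - 3)) ⊆ {m - 3, m - 2, m - 1} := by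
          intro x hx
          have h1 := Finset.mem_filter.mp hx
          have h2 := hlt x h1.1
          simp only [Finset.mem_insert, Finset.mem_singleton]
          omega
        have hc3 : ({m - 3, m - 2, m - 1} : Finset ℕ).card ≤ 3 := by
          refine (Finset.card_insert_le _ _).trans ?_
          have := Finset.card_insert_le (m - 2) ({m - 1} : Finset ℕ)
          simp at this ⊢
          omega
        have heq := Finset.eq_of_subset_of_card_le hsub (by omega)
        have hmem : ∀ y ∈ ({m - 3, m - 2, m - 1} : Finset ℕ), y ∈ S := by
          intro y hy
          rw [← heq] at hy
          exact (Finset.mem_filter.mp hy).1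
        have e1 : m - 3 ∈ S := hmem _ (by simp)
        have e2 : m - 3 + 1 ∈ S := by
          have he : m - 3 + 1 = m - 2 := by omega
          rw [he]; exact hmem _ (by simp)
        have e3 : m - 3 + 2 ∈ S := by
          have he : m - 3 + 2 = m - 1 := by omega
          rw [he]; exact hmem _ (by simp)
        exact h3 _ e1 e2 e3
      omega

lemma count_lemma (m : ℕ) :
    ((Finset.range m).filter (fun i => ¬ i % 3 = 2)).card = (2 * m + 2) / 3 := by
  induction m with
  | zero => simp
  | succ k ih =>
    rw [Finset.range_add_one, Finset.filter_insert]
    by_cases h : k % 3 = 2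
    · rw [if_neg (by simpa using h), ih]
      obtain ⟨q, rfl⟩ : ∃ q, k = 3 * q + 2 := ⟨k / 3, by omega⟩
      omega
    · rw [if_pos (by simpa using h), Finset.card_insert_of_notMem (by simp), ih]
      obtain ⟨q, hq⟩ : ∃ q, k = 3 * q ∨ k = 3 * q + 1 := ⟨k / 3, by omega⟩
      rcases hq with rfl | rfl <;> omega

lemma fin_count (m : ℕ) :
    (Finset.univ.filter (fun i : Fin m => ¬ i.val % 3 = 2)).card = (2 * m + 2) / 3 := by
  rw [← count_lemma m]
  apply Finset.card_bij (fun a _ => a.val)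
  · intro a ha
    simp only [Finset.mem_filter, Finset.mem_range, Finset.mem_univ, true_and] at ha ⊢
    exact ⟨a.isLt, ha⟩
  · intro a _ b _ h
    exact Fin.val_injective h
  · intro b hb
    simp only [Finset.mem_filter, Finset.mem_range] at hb
    exact ⟨⟨b, hb.1⟩, by simp [hb.2], rfl⟩

end FanAux

/-- For the fan graph `F_{n-1} = K₁ ⊕ P_{n-1}` (which has `n`
vertices), with `n ≥ 5`, the general position number equals `⌊2n/3⌋`. -/
theorem stmt_0 (n : ℕ) (hn : 5 ≤ n) :
    gpNumber (fanGraph (n - 1)) = 2 * n / 3 := by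
  classical
  set m := n - 1 with hmdef
  have hm4 : 4 ≤ m := by omega
  have hub : ∀ k ∈ {k | ∃ S : Set (Option (Fin m)), IsGPSet (fanGraph m) S ∧ S.ncard = k},
      k ≤ 2 * n / 3 := by
    rintro k ⟨S, hS, rfl⟩
    have hfin : S.Finite := Set.toFinite S
    rw [Set.ncard_eq_toFinset_card S hfin]
    set F := hfin.toFinset with hF
    have hmemF : ∀ x, x ∈ F ↔ x ∈ S := fun x => Set.Finite.mem_toFinset hfin
    have hchar := (fan_gp_iff S).mp hS
    by_cases hnone : (none : Option (Fin m)) ∈ S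
    · have h3 : F.card ≤ 3 := by
        by_contra hcard
        rw [not_le] at hcard
        have h1 : 3 ≤ (F.erase none).card := by
          rw [Finset.card_erase_of_mem ((hmemF none).mpr hnone)]; omega
        obtain ⟨a, ha⟩ := Finset.card_pos.mp (by omega : 0 < (F.erase none).card)
        have h2 : 2 ≤ ((F.erase none).erase a).card := by
          rw [Finset.card_erase_of_mem ha]; omega
        obtain ⟨b, hb⟩ := Finset.card_pos.mp
          (by omega : 0 < ((F.erase none).erase a).card)
        obtain ⟨c, hcc⟩ := Finset.card_pos.mp (show 0 < (((F.erase none).erase a).erase b).card by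
          rw [Finset.card_erase_of_mem hb]; omega)
        have hane : a ≠ none := (Finset.mem_erase.mp ha).1
        have haS : a ∈ S := (hmemF a).mp (Finset.mem_erase.mp ha).2
        have hbne : b ≠ a := (Finset.mem_erase.mp hb).1
        have hb' := (Finset.mem_erase.mp hb).2
        have hbnone : b ≠ none := (Finset.mem_erase.mp hb').1
        have hbS : b ∈ S := (hmemF b).mp (Finset.mem_erase.mp hb').2
        have hcb : c ≠ b := (Finset.mem_erase.mp hcc).1
        have hc' := (Finset.mem_erase.mp hcc).2
        have hca : c ≠ a := (Finset.mem_erase.mp hc').1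
        have hc'' := (Finset.mem_erase.mp hc').2
        have hcnone : c ≠ none := (Finset.mem_erase.mp hc'').1
        have hcS : c ∈ S := (hmemF c).mp (Finset.mem_erase.mp hc'').2
        obtain ⟨i, rfl⟩ := Option.ne_none_iff_exists'.mp hane
        obtain ⟨j, rfl⟩ := Option.ne_none_iff_exists'.mp hbnone
        obtain ⟨l, rfl⟩ := Option.ne_none_iff_exists'.mp hcnone
        have A1 : (fanGraph m).Adj (some i) (some j) :=
          hchar haS hnone hbS hane (Ne.symm hbnone) (Ne.symm hbne)
            (fan_adj_some_none i) (fan_adj_none_some j)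
        have A2 : (fanGraph m).Adj (some i) (some l) :=
          hchar haS hnone hcS hane (Ne.symm hcnone) (Ne.symm hca)
            (fan_adj_some_none i) (fan_adj_none_some l)
        have A3 : (fanGraph m).Adj (some j) (some l) :=
          hchar hbS hnone hcS hbnone (Ne.symm hcnone) (Ne.symm hcb)
            (fan_adj_some_none j) (fan_adj_none_some l)
        rw [fan_adj_some_some] at A1 A2 A3
        omega
      omega
    · set g : Option (Fin m) → ℕ := fun x => x.elim 0 Fin.val with hg
      set N := F.image g with hNdef
      have himg : ∀ x ∈ N, ∃ i : Fin m, some i ∈ S ∧ i.val = x := by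
        intro x hx
        obtain ⟨y, hy, hyx⟩ := Finset.mem_image.mp hx
        have hyS := (hmemF y).mp hy
        cases y with
        | none => exact absurd hyS hnone
        | some i => exact ⟨i, hyS, hyx⟩
      have hcard : N.card = F.card := by
        apply Finset.card_image_of_injOn
        intro x hx y hy hxy
        have hxS := (hmemF x).mp hx
        have hyS := (hmemF y).mp hy
        cases x with
        | none => exact absurd hxS hnone
        | some i =>
          cases y with
          | none => exact absurd hyS hnone
          | some j => exact congrArg some (Fin.val_injective hxy)
      have hno3 : ∀ x, x ∈ N → x + 1 ∈ N → x + 2 ∈ N → False := by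
        intro x hx hx1 hx2
        obtain ⟨i, hiS, hi⟩ := himg x hx
        obtain ⟨j, hjS, hj⟩ := himg _ hx1
        obtain ⟨l, hlS, hl⟩ := himg _ hx2
        have hij : (some i : Option (Fin m)) ≠ some j := by
          intro h; rw [Option.some_inj] at h; rw [h] at hi; omega
        have hjl : (some j : Option (Fin m)) ≠ some l := by
          intro h; rw [Option.some_inj] at h; rw [h] at hj; omega
        have hil : (some i : Option (Fin m)) ≠ some l := by
          intro h; rw [Option.some_inj] at h; rw [h] at hi; omega
        have A1 : (fanGraph m).Adj (some i) (some j) :=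
          (fan_adj_some_some i j).mpr (by omega)
        have A2 : (fanGraph m).Adj (some j) (some l) :=
          (fan_adj_some_some j l).mpr (by omega)
        have A3 := hchar hiS hjS hlS hij hjl hil A1 A2
        rw [fan_adj_some_some] at A3
        omega
      have hbound := no3_card m N
        (fun x hx => by obtain ⟨i, _, rfl⟩ := himg x hx; exact i.isLt) hno3
      omega
  have hmem : 2 * n / 3 ∈
      {k | ∃ S : Set (Option (Fin m)), IsGPSet (fanGraph m) S ∧ S.ncard = k} := by
    refine ⟨↑((Finset.univ.filter (fun i : Fin m => ¬ i.val % 3 = 2)).image some), ?_, ?_⟩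
    · rw [fan_gp_iff]
      intro u v w hu hv hw h1 h2 h3 A1 A2
      simp only [Finset.coe_image, Set.mem_image, Finset.mem_coe, Finset.mem_filter,
        Finset.mem_univ, true_and] at hu hv hw
      obtain ⟨a, ha, rfl⟩ := hu
      obtain ⟨b, hb, rfl⟩ := hv
      obtain ⟨c, hc, rfl⟩ := hw
      exfalso
      rw [fan_adj_some_some] at A1 A2
      have hac : a.val ≠ c.val := fun h => h3 (congrArg some (Fin.val_injective h))
      omega
    · rw [Set.ncard_coe_finset,
        Finset.card_image_of_injective _ (Option.some_injective _), fin_count]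
      omega
  refine le_antisymm (csSup_le ⟨_, hmem⟩ hub) (le_csSup ⟨2 * n / 3, fun x hx => hub x hx⟩ hmem)
end

section
/- Let G be a maximal outerplanar graph with maximum degree Δ(G) ≥ 2. Then gp(G) ≥ ⌊2(Δ(G)+1)/3⌋. -/
open SimpleGraph

lemma my_dist_le_two {V : Type*} {G : SimpleGraph V} {z x y : V} (hx : G.Adj z x) (hy : G.Adj z y) :
    G.dist x y ≤ 2 := by
  simpa using SimpleGraph.dist_le (Walk.cons hx.symm (Walk.cons hy Walk.nil))

lemma my_dist_two {V : Type*} {G : SimpleGraph V} {z x y : V} (hx : G.Adj z x) (hy : G.Adj z y)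
    (hne : x ≠ y) (hna : ¬ G.Adj x y) : G.dist x y = 2 := by
  have hr : G.Reachable x y := ⟨Walk.cons hx.symm (Walk.cons hy Walk.nil)⟩
  have h2 := my_dist_le_two hx hy
  have h0 : 0 < G.dist x y := hr.pos_dist_of_ne hne
  have h1 : G.dist x y ≠ 1 := fun h => hna (SimpleGraph.dist_eq_one_iff_adj.mp h)
  omega

lemma my_subval {n : ℕ} [NeZero n] (a b : Fin n) : (a - b).val = ((n - b.val) + a.val) % n := by
  rw [Fin.sub_def]

lemma my_key1 {n a b : ℕ} (hab : a ≤ b) (hb : b < n) : ((n - a) + b) % n = b - a := by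
  have h : (n - a) + b = n + (b - a) := by omega
  rw [h, Nat.add_mod_left, Nat.mod_eq_of_lt (by omega)]

lemma my_key2 {n a b : ℕ} (h1 : b < a) (h2 : a < n) : ((n - a) + b) % n = (n - a) + b :=
  Nat.mod_eq_of_lt (by omega)

/-- A maximal outerplanar graph with `Δ(G) ≥ 2` satisfies
`gp(G) ≥ ⌊2(Δ(G)+1)/3⌋`. -/
theorem stmt_1 (n : ℕ) [NeZero n] (G : SimpleGraph (Fin n))
    (hG : IsMOPFin n G) (hΔ : 2 ≤ maxDeg G) :
    2 * (maxDeg G + 1) / 3 ≤ gpNumber G := by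
  classical
  obtain ⟨hn3, hcyc, hnc, hmaxl⟩ := hG
  obtain ⟨z, -, hz⟩ := Finset.exists_mem_eq_sup (Finset.univ : Finset (Fin n))
    ⟨0, Finset.mem_univ 0⟩ (fun v => degSet G v)
  set m := maxDeg G with hmdef
  have hm2 : 2 ≤ m := hΔ
  have hzdeg : (G.neighborSet z).ncard = m := hz.symm
  set F : Finset (Fin n) := (G.neighborSet z).toFinset with hF
  have hFcard : F.card = m := by
    rw [← Set.ncard_eq_toFinset_card']; exact hzdeg
  set F' : Finset (Fin n) := F.image (fun x => x - z) with hF'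
  have hinj : Function.Injective (fun x : Fin n => x - z) := sub_left_injective
  have hF'card : F'.card = m := by
    rw [hF', Finset.card_image_of_injective _ hinj, hFcard]
  set e : Fin m → Fin n := fun i => F'.orderEmbOfFin hF'card i with he
  have hemono : StrictMono e := (F'.orderEmbOfFin hF'card).strictMono
  set u : Fin m → Fin n := fun i => e i + z with hu
  have hadj : ∀ i, G.Adj z (u i) := by
    intro i
    have hmem : e i ∈ F' := Finset.orderEmbOfFin_mem F' hF'card i
    rw [hF', Finset.mem_image] at hmem
    obtain ⟨x, hxF, hxe⟩ := hmem
    have hx : G.Adj z x := by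
      rw [hF, Set.mem_toFinset] at hxF; exact hxF
    have hux : u i = x := by
      show e i + z = x
      rw [← hxe]; abel
    rwa [hux]
  have ht0 : ∀ i, 0 < (e i).val := by
    intro i
    rcases Nat.eq_zero_or_pos (e i).val with h | h
    swap
    · exact h
    · exfalso
      have he0 : e i = 0 := Fin.ext h
      have : u i = z := by show e i + z = z; rw [he0]; abel
      exact (hadj i).ne (this.symm)
  have huinj : Function.Injective u := by
    intro i j h
    have h' : e i = e j := add_right_cancel h
    exact hemono.injective h'
  have hvalu : ∀ i j : Fin m, (u i - u j).val = ((n - (e j).val) + (e i).val) % n := by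
    intro i j
    have h : u i - u j = e i - e j := by show (e i + z) - (e j + z) = e i - e j; abel
    rw [h, my_subval]
  have hvalz : ∀ j : Fin m, (z - u j).val = ((n - (e j).val) + 0) % n := by
    intro j
    have h : z - u j = 0 - e j := by show z - (e j + z) = 0 - e j; abel
    rw [h, my_subval, Fin.val_zero]
  -- Non-adjacency of non-consecutive neighbors
  have hA : ∀ i j : Fin m, i.val + 1 < j.val → ¬ G.Adj (u i) (u j) := by
    intro i j hij hadj'
    have hk : i.val + 1 < m := lt_trans hij j.isLt
    set k : Fin m := ⟨i.val + 1, hk⟩ with hkdef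
    have h1 : (e i).val < (e k).val := hemono (by simp [hkdef, Fin.lt_def])
    have h2 : (e k).val < (e j).val := hemono (by simp [hkdef, Fin.lt_def]; omega)
    have h3 : (e j).val < n := (e j).isLt
    have h0i : 0 < (e i).val := ht0 i
    have h0j : 0 < (e j).val := ht0 j
    refine hnc (u i) (u j) (u k) z hadj' ((hadj k).symm) ⟨⟨?_, ?_⟩, ?_, ?_⟩
    · rw [hvalu k i, my_key1 (le_of_lt h1) (lt_trans h2 h3)]; omega
    · rw [hvalu k i, hvalu j i, my_key1 (le_of_lt h1) (lt_trans h2 h3),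
        my_key1 (le_of_lt (lt_trans h1 h2)) h3]
      omega
    · rw [hvalz j, my_key2 h0j h3]; omega
    · rw [hvalz j, hvalu i j, my_key2 h0j h3, my_key2 (lt_trans h1 h2) h3]
      omega
  have hA' : ∀ i j : Fin m, G.Adj (u i) (u j) → i.val ≤ j.val + 1 ∧ j.val ≤ i.val + 1 := by
    intro i j h
    constructor <;> by_contra hcon
    · exact hA j i (by omega) h.symm
    · exact hA i j (by omega) h
  -- the selected set
  set q := 2 * (m + 1) / 3 with hq
  have hgb : ∀ j : Fin q, 3 * (j.val / 2) + j.val % 2 < m := by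
    intro j
    have := j.isLt
    omega
  set g : Fin q → Fin m := fun j => ⟨3 * (j.val / 2) + j.val % 2, hgb j⟩ with hgdef
  have hginj : Function.Injective g := by
    intro a b h
    have h' : 3 * (a.val / 2) + a.val % 2 = 3 * (b.val / 2) + b.val % 2 := congrArg Fin.val h
    have : a.val = b.val := by omega
    exact Fin.ext this
  have huginj : Function.Injective (fun j : Fin q => u (g j)) :=
    fun a b h => hginj (huinj h)
  set Sf : Finset (Fin n) := Finset.image (fun j : Fin q => u (g j)) Finset.univ with hSf
  have hScard : (↑Sf : Set (Fin n)).ncard = q := by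
    rw [Set.ncard_coe_finset, hSf, Finset.card_image_of_injective _ huginj,
      Finset.card_univ, Fintype.card_fin]
  have hGP : IsGPSet G ↑Sf := by
    intro x y w hx hy hw hxy hyw hxw
    rw [Finset.mem_coe, hSf, Finset.mem_image] at hx hy hw
    obtain ⟨a, -, rfl⟩ := hx
    obtain ⟨b, -, rfl⟩ := hy
    obtain ⟨c, -, rfl⟩ := hw
    have hdxw : G.dist (u (g a)) (u (g c)) ≤ 2 := my_dist_le_two (hadj _) (hadj _)
    by_cases h1 : G.Adj (u (g a)) (u (g b)) <;> by_cases h2 : G.Adj (u (g b)) (u (g c))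
    · exfalso
      have p1 := hA' _ _ h1
      have p2 := hA' _ _ h2
      have n1 : (g a).val ≠ (g b).val := fun h => hxy (congrArg u (Fin.ext h))
      have n2 : (g b).val ≠ (g c).val := fun h => hyw (congrArg u (Fin.ext h))
      have n3 : (g a).val ≠ (g c).val := fun h => hxw (congrArg u (Fin.ext h))
      have gval : ∀ j : Fin q, (g j).val = 3 * (j.val / 2) + j.val % 2 := fun j => rfl
      have m1 : (g a).val % 3 ≠ 2 := by rw [gval]; omega
      have m2 : (g b).val % 3 ≠ 2 := by rw [gval]; omega
      have m3 : (g c).val % 3 ≠ 2 := by rw [gval]; omega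
      omega
    · have d1 : G.dist (u (g a)) (u (g b)) = 1 := SimpleGraph.dist_eq_one_iff_adj.mpr h1
      have d2 : G.dist (u (g b)) (u (g c)) = 2 := my_dist_two (hadj _) (hadj _) hyw h2
      omega
    · have d1 : G.dist (u (g a)) (u (g b)) = 2 := my_dist_two (hadj _) (hadj _) hxy h1
      have d2 : G.dist (u (g b)) (u (g c)) = 1 := SimpleGraph.dist_eq_one_iff_adj.mpr h2
      omega
    · have d1 : G.dist (u (g a)) (u (g b)) = 2 := my_dist_two (hadj _) (hadj _) hxy h1
      have d2 : G.dist (u (g b)) (u (g c)) = 2 := my_dist_two (hadj _) (hadj _) hyw h2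
      omega
  have hbdd : BddAbove {k | ∃ S : Set (Fin n), IsGPSet G S ∧ S.ncard = k} := by
    refine ⟨n, fun k hk => ?_⟩
    obtain ⟨S, -, rfl⟩ := hk
    calc S.ncard ≤ (Set.univ : Set (Fin n)).ncard :=
          Set.ncard_le_ncard (Set.subset_univ _) Set.finite_univ
      _ = n := by rw [Set.ncard_univ, Nat.card_eq_fintype_card, Fintype.card_fin]
  have hmem : q ∈ {k | ∃ S : Set (Fin n), IsGPSet G S ∧ S.ncard = k} := ⟨↑Sf, hGP, hScard⟩
  exact le_csSup hbdd hmem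
end

section
/- Let G be a maximal outerplanar graph of order n ≥ 6 and let S be a general position set of G with |S| ≥ 4. Then the subgraph of G induced by S contains no triangle. -/
open SimpleGraph

section aux
open SimpleGraph
open scoped Fin.NatCast Fin.CommRing
variable {n : ℕ} [NeZero n]

set_option linter.unusedSectionVars false

private lemma subval (x y : Fin n) :
    (x - y).val = if y.val ≤ x.val then x.val - y.val else x.val + n - y.val := by
  rw [Fin.sub_def]
  have hx := x.isLt; have hy := y.isLt
  show ((n - y.val) + x.val) % n = _
  split_ifs with h
  · have h2 : (n - y.val) + x.val = (x.val - y.val) + n := by omega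
    rw [h2, Nat.add_mod_right, Nat.mod_eq_of_lt (show x.val - y.val < n by omega)]
  · rw [Nat.mod_eq_of_lt (show (n - y.val) + x.val < n by omega)]
    omega

private lemma diff_val (x y a : Fin n) :
    (x - y).val = if (y - a).val ≤ (x - a).val then (x - a).val - (y - a).val
      else (x - a).val + n - (y - a).val := by
  have h : x - y = (x - a) - (y - a) := by ring
  rw [h, subval]

private lemma sub_val_pos {x y : Fin n} (h : x ≠ y) : 0 < (x - y).val := by
  rcases Nat.eq_zero_or_pos (x - y).val with h0 | h0
  · exact absurd (sub_eq_zero.mp (Fin.ext (by rw [h0, Fin.val_zero]))) h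
  · exact h0

private lemma sub_val_ne {x y a : Fin n} (h : x ≠ y) : (x - a).val ≠ (y - a).val := by
  intro he
  exact h (by have := Fin.val_injective he; exact sub_left_inj.mp this)

/-- if z is not in the closed arc from x to y, it is strictly between y and x. -/
private lemma outside_btw {x y z : Fin n} (hxy : x ≠ y) (hzx : z ≠ x) (hzy : z ≠ y)
    (h : ¬ StrictBtw x z y) : StrictBtw y z x := by
  have hp : 0 < (z - x).val := sub_val_pos hzx
  have hq : 0 < (y - x).val := sub_val_pos (Ne.symm hxy)
  have hne : (z - x).val ≠ (y - x).val := sub_val_ne hzy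
  have hgt : (y - x).val < (z - x).val := by
    rcases lt_trichotomy (z - x).val (y - x).val with h' | h' | h'
    · exact absurd ⟨hp, h'⟩ h
    · exact absurd h' hne
    · exact h'
  have h1 : (z - y).val = (z - x).val - (y - x).val := by
    rw [diff_val z y x, if_pos (le_of_lt hgt)]
  have h2 : (x - y).val = n - (y - x).val := by
    have hx0 : (x - x).val = 0 := by simp
    rw [diff_val x y x, if_neg (by rw [hx0]; omega), hx0]; omega
  have hzlt := (z - x).isLt
  constructor
  · omega
  · omega

/-- separation: every walk from inside the arc (x,y) to a vertex outside the
closed arc must pass through x or y. -/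
private lemma walk_sep {G : SimpleGraph (Fin n)}
    (hnc : ∀ a b c d : Fin n, G.Adj a b → G.Adj c d → ¬ Crossing a b c d)
    {x y w : Fin n} (hxy : G.Adj x y) (hwx : w ≠ x) (hwy : w ≠ y)
    (hwout : ¬ StrictBtw x w y) :
    ∀ {d : Fin n} (p : G.Walk d w), StrictBtw x d y →
      x ∈ p.support ∨ y ∈ p.support := by
  have main : ∀ {d w' : Fin n} (p : G.Walk d w'), StrictBtw x d y → w' ≠ x → w' ≠ y →
      ¬ StrictBtw x w' y → x ∈ p.support ∨ y ∈ p.support := by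
    intro d w' p
    induction p with
    | nil => intro hd _ _ hwout; exact absurd hd hwout
    | @cons u e w2 h q ih =>
      intro hd hwx' hwy' hwout'
      by_cases hex : e = x
      · left; subst hex; exact List.mem_cons_of_mem _ (SimpleGraph.Walk.start_mem_support q)
      by_cases hey : e = y
      · right; subst hey; exact List.mem_cons_of_mem _ (SimpleGraph.Walk.start_mem_support q)
      by_cases heb : StrictBtw x e y
      · rcases ih heb hwx' hwy' hwout' with h' | h'
        · left; exact List.mem_cons_of_mem _ h'
        · right; exact List.mem_cons_of_mem _ h'
      · exfalso
        have hcross : Crossing x y u e := ⟨hd, outside_btw hxy.ne hex hey heb⟩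
        exact hnc x y u e hxy h hcross
  intro d p hd
  exact main p hd hwx hwy hwout

private lemma mop_connected {G : SimpleGraph (Fin n)}
    (hcyc : ∀ i : Fin n, G.Adj i (i + 1)) : G.Connected := by
  have key : ∀ (k : ℕ) (u : Fin n), G.Reachable u (u + (k : Fin n)) := by
    intro k
    induction k with
    | zero => intro u; simpa using SimpleGraph.Reachable.refl u
    | succ m ih =>
      intro u
      have h1 : ((m + 1 : ℕ) : Fin n) = ((m : ℕ) : Fin n) + 1 := by push_cast; ring
      have h2 : u + ((m + 1 : ℕ) : Fin n) = (u + (m : Fin n)) + 1 := by rw [h1]; ring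
      rw [h2]
      exact (ih u).trans (hcyc (u + (m : Fin n))).reachable
  constructor
  intro u v
  have := key (v - u).val u
  rwa [Fin.cast_val_eq_self, add_sub_cancel] at this

/-- core contradiction: d strictly between x,y ∈ S adjacent, z ∈ S outside. -/
private lemma core {G : SimpleGraph (Fin n)}
    (hnc : ∀ a b c d : Fin n, G.Adj a b → G.Adj c d → ¬ Crossing a b c d)
    (hconn : G.Connected) {S : Set (Fin n)} (hS : IsGPSet G S)
    {x y z d : Fin n} (hx : x ∈ S) (hy : y ∈ S) (hz : z ∈ S) (hd : d ∈ S)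
    (hadj : G.Adj x y) (hdz : d ≠ z)
    (hbtw : StrictBtw x d y) (hzx : z ≠ x) (hzy : z ≠ y)
    (hzout : ¬ StrictBtw x z y) : False := by
  have hdx : d ≠ x := by
    intro h; subst h
    have h1 : (d - d).val = 0 := by rw [sub_self, Fin.val_zero]
    have := hbtw.1; omega
  have hdy : d ≠ y := by
    intro h; subst h; exact lt_irrefl _ hbtw.2
  obtain ⟨p, hp⟩ := hconn.exists_walk_length_eq_dist d z
  have hmem := walk_sep hnc hadj hzx hzy hzout p hbtw
  -- pick v ∈ {x, y} on the walk
  have main : ∀ v : Fin n, v ∈ S → v ≠ d → v ≠ z → v ∈ p.support → False := by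
    intro v hvS hvd hvz hvp
    have hsplit := congr_arg SimpleGraph.Walk.length (p.take_spec hvp)
    rw [SimpleGraph.Walk.length_append] at hsplit
    have h1 : G.dist d v ≤ (p.takeUntil v hvp).length := SimpleGraph.dist_le _
    have h2 : G.dist v z ≤ (p.dropUntil v hvp).length := SimpleGraph.dist_le _
    have hle : G.dist d v + G.dist v z ≤ G.dist d z := by omega
    have hge : G.dist d z ≤ G.dist d v + G.dist v z := hconn.dist_triangle
    exact hS hd hvS hz (Ne.symm hvd) hvz hdz (by omega)
  rcases hmem with h' | h'
  · exact main x hx (Ne.symm hdx) hzx.symm h'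
  · exact main y hy (Ne.symm hdy) hzy.symm h'

end aux

/-- In a maximal outerplanar graph of order `n ≥ 6`, the subgraph
induced by a general position set of size at least 4 contains no triangle. -/
theorem stmt_4 (n : ℕ) [NeZero n] (hn : 6 ≤ n) (G : SimpleGraph (Fin n))
    (hG : IsMOPFin n G) (S : Set (Fin n)) (hS : IsGPSet G S) (hcard : 4 ≤ S.ncard) :
    ∀ a ∈ S, ∀ b ∈ S, ∀ c ∈ S, ¬ (G.Adj a b ∧ G.Adj b c ∧ G.Adj a c) := by
  obtain ⟨h3, hcyc, hnc, -⟩ := hG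
  have hconn := mop_connected hcyc
  rintro a ha b hb c hc ⟨hab, hbc, hac⟩
  -- find a fourth vertex d
  have hd4 : ∃ d ∈ S, d ≠ a ∧ d ≠ b ∧ d ≠ c := by
    by_contra hcon
    push_neg at hcon
    have hsub : S ⊆ {a, b, c} := by
      intro x hx
      by_cases h1 : x = a
      · exact Or.inl h1
      by_cases h2 : x = b
      · exact Or.inr (Or.inl h2)
      · exact Or.inr (Or.inr (hcon x hx h1 h2))
    have hle := Set.ncard_le_ncard hsub (Set.toFinite _)
    have e1 : ({a, b, c} : Set (Fin n)).ncard ≤ 3 := by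
      refine le_trans (Set.ncard_insert_le _ _) ?_
      have := Set.ncard_insert_le b ({c} : Set (Fin n))
      have := Set.ncard_singleton c
      omega
    omega
  obtain ⟨d, hdS, hda, hdb, hdc⟩ := hd4
  -- basic arithmetic facts about offsets from a
  have hβ0 : 0 < (b - a).val := sub_val_pos (Ne.symm hab.ne)
  have hγ0 : 0 < (c - a).val := sub_val_pos (Ne.symm hac.ne)
  have hδ0 : 0 < (d - a).val := sub_val_pos hda
  have hβn := (b - a).isLt
  have hγn := (c - a).isLt
  have hδn := (d - a).isLt
  have hβγ : (b - a).val ≠ (c - a).val := sub_val_ne hbc.ne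
  have hδβ : (d - a).val ≠ (b - a).val := sub_val_ne hdb
  have hδγ : (d - a).val ≠ (c - a).val := sub_val_ne hdc
  have haa : (a - a).val = 0 := by rw [sub_self, Fin.val_zero]
  rcases lt_trichotomy (b - a).val (c - a).val with hbc1 | hbc1 | hbc1
  · -- β < γ
    by_cases h1 : (d - a).val < (b - a).val
    · -- d in arc (a,b), c outside
      refine core hnc hconn hS ha hb hc hdS hab hdc ⟨hδ0, h1⟩
        (Ne.symm hac.ne) (Ne.symm hbc.ne) ?_
      rintro ⟨-, h2⟩; omega
    by_cases h2 : (d - a).val < (c - a).val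
    · -- d in arc (b,c), a outside
      have e1 : (d - b).val = (d - a).val - (b - a).val := by
        rw [diff_val d b a, if_pos (by omega)]
      have e2 : (c - b).val = (c - a).val - (b - a).val := by
        rw [diff_val c b a, if_pos (by omega)]
      have e3 : (a - b).val = (a - a).val + n - (b - a).val := by
        rw [diff_val a b a, if_neg (by omega)]
      refine core hnc hconn hS hb hc ha hdS hbc hda ⟨by omega, by omega⟩
        hab.ne hac.ne ?_
      rintro ⟨-, h4⟩; omega
    · -- d in arc (c,a), b outside
      have e1 : (d - c).val = (d - a).val - (c - a).val := by
        rw [diff_val d c a, if_pos (by omega)]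
      have e2 : (a - c).val = (a - a).val + n - (c - a).val := by
        rw [diff_val a c a, if_neg (by omega)]
      have e3 : (b - c).val = (b - a).val + n - (c - a).val := by
        rw [diff_val b c a, if_neg (by omega)]
      refine core hnc hconn hS hc ha hb hdS hac.symm hdb ⟨by omega, by omega⟩
        hbc.ne hab.ne.symm ?_
      rintro ⟨-, h4⟩; omega
  · exact absurd hbc1 hβγ
  · -- γ < β
    by_cases h1 : (d - a).val < (c - a).val
    · -- d in arc (a,c), b outside
      refine core hnc hconn hS ha hc hb hdS hac hdb ⟨hδ0, h1⟩
        (Ne.symm hab.ne) hbc.ne ?_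
      rintro ⟨-, h2⟩; omega
    by_cases h2 : (d - a).val < (b - a).val
    · -- d in arc (c,b), a outside
      have e1 : (d - c).val = (d - a).val - (c - a).val := by
        rw [diff_val d c a, if_pos (by omega)]
      have e2 : (b - c).val = (b - a).val - (c - a).val := by
        rw [diff_val b c a, if_pos (by omega)]
      have e3 : (a - c).val = (a - a).val + n - (c - a).val := by
        rw [diff_val a c a, if_neg (by omega)]
      refine core hnc hconn hS hc hb ha hdS hbc.symm hda ⟨by omega, by omega⟩
        hac.ne hab.ne ?_
      rintro ⟨-, h4⟩; omega
    · -- d in arc (b,a), c outside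
      have e1 : (d - b).val = (d - a).val - (b - a).val := by
        rw [diff_val d b a, if_pos (by omega)]
      have e2 : (a - b).val = (a - a).val + n - (b - a).val := by
        rw [diff_val a b a, if_neg (by omega)]
      have e3 : (c - b).val = (c - a).val + n - (b - a).val := by
        rw [diff_val c b a, if_neg (by omega)]
      refine core hnc hconn hS hb ha hc hdS hab.symm hdc ⟨by omega, by omega⟩
        hbc.ne.symm (Ne.symm hac.ne) ?_
      rintro ⟨-, h4⟩; omega
end

section
/- Let G be a maximal outerplanar graph of order n ≥ 6. Then gp(G) ≤ ⌊2n/3⌋. -/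
open SimpleGraph

open Fin.CommRing

section helpers
variable {n : ℕ} [NeZero n]

lemma sub_val' (a b : Fin n) :
    (a - b).val = if b.val ≤ a.val then a.val - b.val else a.val + n - b.val := by
  have hb := b.isLt
  have ha := a.isLt
  rw [Fin.sub_def]
  simp only []
  split
  · have : n - b.val + a.val = (a.val - b.val) + n := by omega
    rw [this, Nat.add_mod_right, Nat.mod_eq_of_lt (by omega)]
  · rw [Nat.mod_eq_of_lt (by omega)]
    omega

lemma val_two' (hn : 3 ≤ n) : (2 : Fin n).val = 2 := by
  have : ((2:ℕ) : Fin n).val = 2 % n := Fin.val_natCast ..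
  simpa [Nat.mod_eq_of_lt (show 2 < n by omega)] using this

lemma val_one'' (hn : 3 ≤ n) : (1 : Fin n).val = 1 := by
  have : ((1:ℕ) : Fin n).val = 1 % n := Fin.val_natCast ..
  simpa [Nat.mod_eq_of_lt (show 1 < n by omega)] using this

lemma val_neg_one' (hn : 3 ≤ n) : (-1 : Fin n).val = n - 1 := by
  have h : (-1 : Fin n) = 0 - 1 := by ring
  rw [h, sub_val', Fin.val_zero, val_one'' hn, if_neg (by omega)]
  omega

lemma val_neg_two' (hn : 3 ≤ n) : (-2 : Fin n).val = n - 2 := by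
  have h : (-2 : Fin n) = 0 - 2 := by ring
  rw [h, sub_val', Fin.val_zero, val_two' hn, if_neg (by omega)]
  omega

lemma ne_add_one' (hn : 3 ≤ n) (i : Fin n) : i ≠ i + 1 := by
  intro h
  have h1 : (i+1) - i = 1 := by ring
  rw [← h, sub_self] at h1
  have := congrArg Fin.val h1
  simp [val_one'' hn] at this
  omega

lemma ne_add_two' (hn : 3 ≤ n) (i : Fin n) : i ≠ i + 2 := by
  intro h
  have h1 : (i+2) - i = 2 := by ring
  rw [← h, sub_self] at h1
  have := congrArg Fin.val h1
  simp [val_two' hn] at this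
  rw [Nat.mod_eq_of_lt (by omega)] at this
  omega

lemma one_ne_two' (hn : 3 ≤ n) : (1 : Fin n) ≠ 2 := by
  intro h
  have := congrArg Fin.val h
  rw [val_one'' hn, val_two' hn] at this
  omega

end helpers

lemma mop_conn {n : ℕ} [NeZero n] (G : SimpleGraph (Fin n))
    (h : ∀ i : Fin n, G.Adj i (i + 1)) : G.Connected := by
  rw [SimpleGraph.connected_iff]
  refine ⟨?_, ⟨0⟩⟩
  have key : ∀ k : ℕ, G.Reachable 0 (k : Fin n) := by
    intro k
    induction k with
    | zero => simpa using Reachable.refl (0 : Fin n)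
    | succ k ih =>
        have : ((k + 1 : ℕ) : Fin n) = (k : Fin n) + 1 := by push_cast; ring
        rw [this]
        exact ih.trans (h _).reachable
  intro u v
  have hu := key u.val
  have hv := key v.val
  rw [Fin.cast_val_eq_self] at hu hv
  exact hu.symm.trans hv

lemma mop_no3 {n : ℕ} [NeZero n] (hn : 6 ≤ n) (G : SimpleGraph (Fin n))
    (hG : IsMOPFin n G) (S : Set (Fin n)) (hS : IsGPSet G S) (hS4 : 4 ≤ S.ncard)
    (i : Fin n) : ¬(i ∈ S ∧ i + 1 ∈ S ∧ i + 2 ∈ S) := by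
  rintro ⟨ha, hb, hc⟩
  obtain ⟨-, hcyc, hnc, -⟩ := hG
  have hconn := mop_conn G hcyc
  have hn3 : 3 ≤ n := by omega
  have hab : i ≠ i + 1 := ne_add_one' hn3 i
  have hac : i ≠ i + 2 := ne_add_two' hn3 i
  have haux : (i + 1) + 1 = i + 2 := by ring
  have hbc : i + 1 ≠ i + 2 := by
    have := ne_add_one' hn3 (i+1); rwa [haux] at this
  have e1 : G.Adj i (i+1) := hcyc i
  have e2 : G.Adj (i+1) (i+2) := by have := hcyc (i+1); rwa [haux] at this
  have hd1 : G.dist i (i+1) = 1 := dist_eq_one_iff_adj.mpr e1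
  have hd2 : G.dist (i+1) (i+2) = 1 := dist_eq_one_iff_adj.mpr e2
  have hne := hS ha hb hc hab hbc hac
  have htri : G.dist i (i+2) ≤ G.dist i (i+1) + G.dist (i+1) (i+2) := hconn.dist_triangle
  have hpos : 0 < G.dist i (i+2) := hconn.pos_dist_of_ne hac
  have echord : G.Adj i (i+2) := by
    rw [← dist_eq_one_iff_adj]
    omega
  -- neighbors of i+1 are only i and i+2
  have hnbr : ∀ x, G.Adj (i+1) x → x = i ∨ x = i+2 := by
    intro x hx
    by_contra hcon
    push_neg at hcon
    obtain ⟨hxi, hxc⟩ := hcon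
    have hxb : x ≠ i + 1 := hx.ne'
    apply hnc i (i+2) (i+1) x echord hx
    have h1 : (i+1) - i = 1 := by ring
    have h2 : (i+2) - i = 2 := by ring
    refine ⟨⟨?_, ?_⟩, ?_, ?_⟩
    · rw [h1, val_one'' hn3]; omega
    · rw [h1, h2, val_one'' hn3, val_two' hn3]; omega
    · apply Nat.pos_of_ne_zero
      intro h0
      have h0' : x - (i+2) = 0 := Fin.val_injective (by rw [h0, Fin.val_zero])
      exact hxc (by linear_combination h0')
    · have hI : i - (i+2) = -2 := by ring
      have hlt := (x - (i+2)).isLt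
      have hne1 : (x - (i+2)).val ≠ n - 1 := by
        intro h
        have h' : x - (i+2) = -1 := Fin.val_injective (by rw [h, val_neg_one' hn3])
        exact hxb (by linear_combination h')
      have hne2 : (x - (i+2)).val ≠ n - 2 := by
        intro h
        have h' : x - (i+2) = -2 := Fin.val_injective (by rw [h, val_neg_two' hn3])
        exact hxi (by linear_combination h')
      rw [hI, val_neg_two' hn3]
      omega
  -- find a fourth vertex
  obtain ⟨d, hdS, hdi, hdb, hdc⟩ : ∃ d ∈ S, d ≠ i ∧ d ≠ i+1 ∧ d ≠ i+2 := by
    by_contra hcon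
    push_neg at hcon
    have hsub : S ⊆ {i, i+1, i+2} := by
      intro x hx
      by_cases h1 : x = i
      · exact Or.inl h1
      by_cases h2 : x = i + 1
      · exact Or.inr (Or.inl h2)
      · exact Or.inr (Or.inr (hcon x hx h1 h2))
    have hle := Set.ncard_le_ncard hsub (Set.toFinite _)
    have h3 : ({i, i+1, i+2} : Set (Fin n)).ncard ≤ 3 := by
      refine le_trans (Set.ncard_insert_le _ _) ?_
      have := Set.ncard_insert_le (i+1) ({i+2} : Set (Fin n))
      simp only [Set.ncard_singleton] at this
      omega
    omega
  -- shortest walk from i+1 to d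
  have hbd0 : G.dist (i+1) d ≠ 0 := Nat.pos_iff_ne_zero.mp (hconn.pos_dist_of_ne (Ne.symm hdb))
  obtain ⟨p, hp⟩ := exists_walk_of_dist_ne_zero hbd0
  cases p with
  | nil => exact hdb rfl
  | @cons _ y _ h q =>
      have hy := hnbr _ h
      have hyd : G.dist y d ≤ q.length := dist_le q
      have htri2 : G.dist (i+1) d ≤ G.dist (i+1) y + G.dist y d := hconn.dist_triangle
      have hady : G.dist (i+1) y = 1 := dist_eq_one_iff_adj.mpr h
      have hplen : q.length + 1 = G.dist (i+1) d := by simpa using hp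
      have hdy : d ≠ y := by rcases hy with rfl | rfl; exacts [hdi, hdc]
      have hyb : y ≠ i + 1 := h.ne'
      have hyS : y ∈ S := by rcases hy with rfl | rfl; exacts [ha, hc]
      have hgp := hS hdS hyS hb hdy hyb hdb
      apply hgp
      have c1 : G.dist d (i+1) = G.dist (i+1) d := SimpleGraph.dist_comm
      have c2 : G.dist d y = G.dist y d := SimpleGraph.dist_comm
      have c3 : G.dist y (i+1) = 1 := dist_eq_one_iff_adj.mpr h.symm
      omega

lemma count_le {n : ℕ} [NeZero n] (hn : 3 ≤ n) (T : Finset (Fin n))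
    (h : ∀ i : Fin n, ¬(i ∈ T ∧ i + 1 ∈ T ∧ i + 2 ∈ T)) :
    3 * T.card ≤ 2 * n := by
  classical
  have key : ∀ i : Fin n, (T ∩ {i, i+1, i+2}).card ≤ 2 := by
    intro i
    by_contra hcon
    push_neg at hcon
    have hsub : T ∩ {i, i+1, i+2} ⊆ {i, i+1, i+2} := Finset.inter_subset_right
    have hc3 : ({i, i+1, i+2} : Finset (Fin n)).card ≤ 3 := by
      refine le_trans (Finset.card_insert_le _ _) ?_
      have := Finset.card_insert_le (i+1) ({i+2} : Finset (Fin n))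
      simp only [Finset.card_singleton] at this
      omega
    have heq : T ∩ {i, i+1, i+2} = {i, i+1, i+2} :=
      Finset.eq_of_subset_of_card_le hsub (by omega)
    have hi : i ∈ T := by
      have : i ∈ T ∩ ({i, i+1, i+2} : Finset (Fin n)) := by rw [heq]; simp
      exact (Finset.mem_inter.mp this).1
    have hi1 : i + 1 ∈ T := by
      have : i + 1 ∈ T ∩ ({i, i+1, i+2} : Finset (Fin n)) := by rw [heq]; simp
      exact (Finset.mem_inter.mp this).1
    have hi2 : i + 2 ∈ T := by
      have : i + 2 ∈ T ∩ ({i, i+1, i+2} : Finset (Fin n)) := by rw [heq]; simp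
      exact (Finset.mem_inter.mp this).1
    exact h i ⟨hi, hi1, hi2⟩
  have hcount : ∑ i : Fin n, (T ∩ {i, i+1, i+2}).card = 3 * T.card := by
    have step : ∀ i : Fin n,
        (T ∩ {i, i+1, i+2}).card = ∑ x ∈ T, (if x = i ∨ x = i + 1 ∨ x = i + 2 then 1 else 0) := by
      intro i
      rw [← Finset.filter_mem_eq_inter, Finset.card_filter]
      apply Finset.sum_congr rfl
      intro x _
      simp [Finset.mem_insert]
    rw [Finset.sum_congr rfl (fun i _ => step i), Finset.sum_comm]
    have inner : ∀ x : Fin n,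
        (∑ i : Fin n, if x = i ∨ x = i + 1 ∨ x = i + 2 then 1 else 0) = 3 := by
      intro x
      rw [← Finset.card_filter]
      have hset : Finset.univ.filter (fun i : Fin n => x = i ∨ x = i + 1 ∨ x = i + 2)
          = {x, x - 1, x - 2} := by
        ext i
        simp only [Finset.mem_filter, Finset.mem_univ, true_and, Finset.mem_insert,
          Finset.mem_singleton]
        constructor
        · rintro (h' | h' | h')
          · exact Or.inl h'.symm
          · exact Or.inr (Or.inl (by linear_combination -h'))
          · exact Or.inr (Or.inr (by linear_combination -h'))
        · rintro (rfl | rfl | rfl)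
          · exact Or.inl rfl
          · exact Or.inr (Or.inl (by ring))
          · exact Or.inr (Or.inr (by ring))
      rw [hset]
      have d1 : x ≠ x - 1 := by
        intro h'
        have := ne_add_one' hn (x - 1)
        exact this (by linear_combination -h')
      have d2 : x ≠ x - 2 := by
        intro h'
        have := ne_add_two' hn (x - 2)
        exact this (by linear_combination -h')
      have d3 : x - 1 ≠ x - 2 := by
        intro h'
        exact one_ne_two' hn (by linear_combination -h')
      rw [Finset.card_insert_of_notMem (by simp [d1, d2]),
        Finset.card_insert_of_notMem (by simp [d3]), Finset.card_singleton]
    calc (∑ x ∈ T, ∑ i : Fin n, if x = i ∨ x = i + 1 ∨ x = i + 2 then 1 else 0)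
        = ∑ x ∈ T, 3 := Finset.sum_congr rfl (fun x _ => inner x)
      _ = 3 * T.card := by rw [Finset.sum_const, smul_eq_mul, mul_comm]
  have hle : ∑ i : Fin n, (T ∩ {i, i+1, i+2}).card ≤ ∑ _i : Fin n, 2 :=
    Finset.sum_le_sum (fun i _ => key i)
  simp only [Finset.sum_const, Finset.card_univ, Fintype.card_fin, smul_eq_mul] at hle
  omega

/-- A maximal outerplanar graph of order `n ≥ 6` satisfies
`gp(G) ≤ ⌊2n/3⌋`. -/
theorem stmt_5 (n : ℕ) [NeZero n] (hn : 6 ≤ n) (G : SimpleGraph (Fin n))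
    (hG : IsMOPFin n G) :
    gpNumber G ≤ 2 * n / 3 := by
  classical
  apply csSup_le
  · exact ⟨0, ∅, fun u v w hu _ _ _ _ _ => absurd hu (Set.notMem_empty u), Set.ncard_empty _⟩
  · rintro k ⟨S, hS, rfl⟩
    by_cases hk : S.ncard ≤ 3
    · omega
    · push_neg at hk
      have h3 := fun i => mop_no3 hn G hG S hS (by omega) i
      have hcard : S.ncard = S.toFinset.card := Set.ncard_eq_toFinset_card' S
      have := count_le (by omega) S.toFinset (by
        intro i hi
        exact h3 i ⟨Set.mem_toFinset.mp hi.1, Set.mem_toFinset.mp hi.2.1,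
          Set.mem_toFinset.mp hi.2.2⟩)
      omega
end

section
/- Let G_n be the straight linear 2-tree on n ≥ 7 vertices. Then G_n is (up to isomorphism) the unique maximal outerplanar graph of order n with maximum degree 4; that is, a maximal outerplanar graph G of order n ≥ 7 satisfies Δ(G) = 4 if and only if G ≅ G_n. -/
open SimpleGraph

namespace Stmt10
open Fin.NatCast
variable {n : ℕ} [NeZero n]

lemma npos : 0 < n := Nat.pos_of_ne_zero (NeZero.ne n)

lemma cd_eq (a b : Fin n) :
    (b - a).val = if a.val ≤ b.val then b.val - a.val else b.val + n - a.val := by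
  rw [Fin.sub_def]
  have ha := a.isLt; have hb := b.isLt
  dsimp only
  split
  · have h : n - a.val + b.val = (b.val - a.val) + n := by omega
    rw [h, Nat.add_mod_right, Nat.mod_eq_of_lt (by omega)]
  · rw [Nat.mod_eq_of_lt (by omega)]; omega

lemma cd_inj {a x y : Fin n} (h : (x - a).val = (y - a).val) : x = y := by
  have : x - a = y - a := Fin.ext h
  have h2 : x - a + a = y - a + a := by rw [this]
  rwa [sub_add_cancel, sub_add_cancel] at h2

lemma cd_self (a : Fin n) : (a - a).val = 0 := by simp

lemma cd_sub (a x y : Fin n) :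
    (y - x).val = if (x - a).val ≤ (y - a).val then (y - a).val - (x - a).val
      else (y - a).val + n - (x - a).val := by
  have h : y - x = (y - a) - (x - a) := by abel
  rw [h, cd_eq]

lemma cd_add_one (a x : Fin n) (h2 : 2 ≤ n) :
    ((x + 1) - a).val = if (x - a).val = n - 1 then 0 else (x - a).val + 1 := by
  have h : (x + 1) - a = (x - a) + 1 := by abel
  rw [h, Fin.add_def, Fin.val_one']
  have h1 : 1 % n = 1 := Nat.mod_eq_of_lt (by omega)
  rw [h1]
  have hlt := (x - a).isLt
  dsimp only
  split
  · next heq =>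
      rw [heq]
      have h3 : n - 1 + 1 = n := by omega
      rw [h3, Nat.mod_self]
  · rw [Nat.mod_eq_of_lt (by omega)]

lemma cd_sub_one (a x : Fin n) (h2 : 2 ≤ n) :
    ((x - 1) - a).val = if (x - a).val = 0 then n - 1 else (x - a).val - 1 := by
  have h : (x - 1) - a = (x - a) - 1 := by abel
  rw [h, Fin.sub_def]
  have h1 : (1 : Fin n).val = 1 := by rw [Fin.val_one']; exact Nat.mod_eq_of_lt (by omega)
  rw [h1]
  have hlt := (x - a).isLt
  dsimp only
  split
  · next heq =>
      rw [heq, Nat.add_zero, Nat.mod_eq_of_lt (by omega)]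
  · next hne =>
    have h3 : n - 1 + (x - a).val = ((x - a).val - 1) + n := by omega
    rw [h3, Nat.add_mod_right, Nat.mod_eq_of_lt (by omega)]

lemma cd_add_nat (a : Fin n) (u : ℕ) (hu : u < n) : ((a + (u : Fin n)) - a).val = u := by
  have h : (a + (u : Fin n)) - a = (u : Fin n) := by abel
  rw [h, Fin.val_natCast, Nat.mod_eq_of_lt hu]

lemma eq_add_of_cd {a x : Fin n} {u : ℕ} (hu : u < n) (h : (x - a).val = u) :
    x = a + (u : Fin n) :=
  cd_inj (by rw [h, cd_add_nat a u hu])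

lemma ne_of_cd_ne {a x y : Fin n} (h : (x - a).val ≠ (y - a).val) : x ≠ y := by
  intro he; exact h (by rw [he])

lemma sb_iff (a x b : Fin n) : StrictBtw a x b ↔
    (0 < (x - a).val ∧ (x - a).val < (b - a).val) := Iff.rfl


lemma cd_eq_zero_iff {a x : Fin n} : (x - a).val = 0 ↔ x = a := by
  constructor
  · intro h
    exact cd_inj (by rw [h, cd_self])
  · intro h; rw [h, cd_self]

lemma cd_ne_of_ne {a x y : Fin n} (h : x ≠ y) : (x - a).val ≠ (y - a).val :=
  fun hh => h (cd_inj hh)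

section walkSec
variable {G : SimpleGraph (Fin n)} (hn : 7 ≤ n)
  (hham : ∀ i : Fin n, G.Adj i (i + 1))
  (hnc : ∀ a b c d : Fin n, G.Adj a b → G.Adj c d → ¬ Crossing a b c d)
  (hmax : ∀ a b : Fin n, a ≠ b → ¬ G.Adj a b → ∃ c d, G.Adj c d ∧ Crossing a b c d)
  (hdeg : maxDeg G ≤ 4)

include hdeg in
lemma five {v x1 x2 x3 x4 x5 : Fin n}
    (a1 : G.Adj v x1) (a2 : G.Adj v x2) (a3 : G.Adj v x3) (a4 : G.Adj v x4) (a5 : G.Adj v x5)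
    (d12 : x1 ≠ x2) (d13 : x1 ≠ x3) (d14 : x1 ≠ x4) (d15 : x1 ≠ x5)
    (d23 : x2 ≠ x3) (d24 : x2 ≠ x4) (d25 : x2 ≠ x5) (d34 : x3 ≠ x4) (d35 : x3 ≠ x5)
    (d45 : x4 ≠ x5) : False := by
  have hsub : (({x1,x2,x3,x4,x5} : Finset (Fin n)) : Set (Fin n)) ⊆ G.neighborSet v := by
    intro z hz
    simp only [Finset.coe_insert, Set.mem_insert_iff, Finset.coe_singleton,
      Set.mem_singleton_iff] at hz
    rcases hz with rfl|rfl|rfl|rfl|rfl <;> exact ‹G.Adj v z›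
  have hcard : ({x1,x2,x3,x4,x5} : Finset (Fin n)).card = 5 := by
    rw [Finset.card_insert_of_notMem (by simp [d12,d13,d14,d15]),
        Finset.card_insert_of_notMem (by simp [d23,d24,d25]),
        Finset.card_insert_of_notMem (by simp [d34,d35]),
        Finset.card_insert_of_notMem (by simp [d45]), Finset.card_singleton]
  have h5 : 5 ≤ degSet G v := by
    rw [degSet]
    calc 5 = (({x1,x2,x3,x4,x5} : Finset (Fin n)) : Set (Fin n)).ncard := by
              rw [Set.ncard_coe_finset, hcard]
    _ ≤ (G.neighborSet v).ncard := Set.ncard_le_ncard hsub (Set.toFinite _)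
  have : degSet G v ≤ maxDeg G := Finset.le_sup (Finset.mem_univ v)
  omega

include hham in
lemma adj_pred (b : Fin n) : G.Adj (b - 1) b := by
  have := hham (b - 1); rwa [sub_add_cancel] at this

omit [NeZero n] in
lemma sb {a x b : Fin n} (h1 : 0 < (x - a).val) (h2 : (x - a).val < (b - a).val) :
    StrictBtw a x b := ⟨h1, h2⟩

include hn hham hnc hmax in
lemma ex_triangle (a b : Fin n) (hab : G.Adj a b) (h2 : 2 ≤ (b - a).val) :
    ∃ c, StrictBtw a c b ∧ G.Adj a c ∧ G.Adj c b := by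
  classical
  have hℓn : (b - a).val < n := (b - a).isLt
  have hmem1 : StrictBtw a (a + 1) b ∧ G.Adj a (a + 1) := by
    refine ⟨sb ?_ ?_, hham a⟩
    · rw [cd_add_one a a (by omega), cd_self]
      simp only [if_neg (show ¬ (0:ℕ) = n - 1 by omega)]; omega
    · rw [cd_add_one a a (by omega), cd_self]
      simp only [if_neg (show ¬ (0:ℕ) = n - 1 by omega)]; omega
  have hne : (Finset.univ.filter
      (fun c => StrictBtw a c b ∧ G.Adj a c)).Nonempty :=
    ⟨a + 1, by simpa using hmem1⟩
  obtain ⟨c, hcmem, hcmax⟩ := Finset.exists_max_image _ (fun c => (c - a).val) hne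
  rw [Finset.mem_filter] at hcmem
  obtain ⟨-, hcb, hac⟩ := hcmem
  by_cases hcbadj : G.Adj c b
  · exact ⟨c, hcb, hac, hcbadj⟩
  exfalso
  obtain ⟨hu0, huℓ⟩ := hcb
  have hcneb : c ≠ b := ne_of_cd_ne (a := a) (by omega)
  obtain ⟨e, f, hef, hcr1, hcr2⟩ := hmax c b hcneb hcbadj
  have huen : (e - a).val < n := (e - a).isLt
  have hufn : (f - a).val < n := (f - a).isLt
  obtain ⟨h1, h2⟩ := hcr1
  rw [cd_sub a c e] at h1 h2
  rw [cd_sub a c b] at h2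
  have he : (c - a).val < (e - a).val ∧ (e - a).val < (b - a).val := by
    split at h2 <;> split at h2 <;> split at h1 <;> omega
  obtain ⟨g1, g2⟩ := hcr2
  rw [cd_sub a b f] at g1 g2
  rw [cd_sub a b c] at g2
  have hf : (f - a).val = 0 ∨ (0 < (f - a).val ∧ (f - a).val < (c - a).val) ∨
      ((b - a).val < (f - a).val) := by
    split at g2 <;> split at g2 <;> split at g1 <;> omega
  rcases hf with hf | ⟨hf1, hf2⟩ | hf
  · have hfa : f = a := cd_inj (by rw [hf, cd_self])
    rw [hfa] at hef
    have hemem : e ∈ Finset.univ.filter (fun c => StrictBtw a c b ∧ G.Adj a c) := by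
      rw [Finset.mem_filter]
      exact ⟨Finset.mem_univ _, sb (by omega) (by omega), hef.symm⟩
    have := hcmax e hemem
    omega
  · refine hnc a c f e hac hef.symm ⟨sb (by omega) (by omega), sb ?_ ?_⟩
    · rw [cd_sub a c e]; split <;> omega
    · rw [cd_sub a c e, cd_sub a c a, cd_self]
      split <;> split <;> omega
  · refine hnc a b e f hab hef ⟨sb (by omega) (by omega), sb ?_ ?_⟩
    · rw [cd_sub a b f]; split <;> omega
    · rw [cd_sub a b f, cd_sub a b a, cd_self]
      split <;> split <;> omega

def SatLow (G : SimpleGraph (Fin n)) (a b : Fin n) : Prop :=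
  ∃ x, G.Adj a x ∧ x ≠ a - 1 ∧ x ≠ b ∧ ¬ StrictBtw a x b

def SatHigh (G : SimpleGraph (Fin n)) (a b : Fin n) : Prop :=
  ∃ x, G.Adj b x ∧ x ≠ b + 1 ∧ x ≠ a ∧ ¬ StrictBtw a x b

def Pat (base u v : ℕ) : Prop :=
  (u + 1 = v ∨ v + 1 = u) ∨ (u ≠ v ∧ (u + v = base ∨ u + v = base + 1))

lemma pat_comm {base u v : ℕ} : Pat base u v ↔ Pat base v u := by unfold Pat; omega

include hn hham hdeg in
lemma low_only {a b c : Fin n} (hab : G.Adj a b) (hSL : SatLow G a b)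
    (hl2 : 2 ≤ (b - a).val) (hln : (b - a).val ≤ n - 2)
    (hc : StrictBtw a c b) (hac : G.Adj a c) : (c - a).val = 1 := by
  by_contra hne
  obtain ⟨x, hax, hx1, hx2, hx3⟩ := hSL
  have cdm1 : ((a - 1) - a).val = n - 1 := by
    rw [cd_sub_one a a (by omega), cd_self]; simp
  have cdp1 : ((a + 1) - a).val = 1 := by
    rw [cd_add_one a a (by omega), cd_self]
    simp only [if_neg (show ¬ (0:ℕ) = n - 1 by omega)]
  have hxa : (x - a).val ≠ 0 := fun h => G.ne_of_adj hax (cd_eq_zero_iff.mp h).symm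
  have hxm1 : (x - a).val ≠ n - 1 := by
    intro h; exact cd_ne_of_ne (a := a) hx1 (by rw [h, cdm1])
  have hxb : (x - a).val ≠ (b - a).val := cd_ne_of_ne hx2
  have hxsb : ¬ (0 < (x - a).val ∧ (x - a).val < (b - a).val) := hx3
  obtain ⟨hc0, hcl⟩ := hc
  have hxn := (x - a).isLt
  have hbn := (b - a).isLt
  have h00 : (a - a).val = 0 := cd_self a
  have d12 : (a - 1 : Fin n) ≠ a + 1 := ne_of_cd_ne (a := a) (by omega)
  have d13 : (a - 1 : Fin n) ≠ x := ne_of_cd_ne (a := a) (by omega)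
  have d14 : (a - 1 : Fin n) ≠ b := ne_of_cd_ne (a := a) (by omega)
  have d15 : (a - 1 : Fin n) ≠ c := ne_of_cd_ne (a := a) (by omega)
  have d23 : (a + 1 : Fin n) ≠ x := ne_of_cd_ne (a := a) (by omega)
  have d24 : (a + 1 : Fin n) ≠ b := ne_of_cd_ne (a := a) (by omega)
  have d25 : (a + 1 : Fin n) ≠ c := ne_of_cd_ne (a := a) (by omega)
  have d34 : x ≠ b := hx2
  have d35 : x ≠ c := ne_of_cd_ne (a := a) (by omega)
  have d45 : b ≠ c := ne_of_cd_ne (a := a) (by omega)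
  exact five hdeg ((adj_pred hham a).symm) (hham a) hax hab hac
    d12 d13 d14 d15 d23 d24 d25 d34 d35 d45

include hn hham hdeg in
lemma high_only {a b c : Fin n} (hab : G.Adj a b) (hSH : SatHigh G a b)
    (hl2 : 2 ≤ (b - a).val) (hln : (b - a).val ≤ n - 2)
    (hc : StrictBtw a c b) (hcb : G.Adj c b) : (c - a).val = (b - a).val - 1 := by
  by_contra hne
  obtain ⟨x, hbx, hx1, hx2, hx3⟩ := hSH
  have cdbp1 : ((b + 1) - a).val = (b - a).val + 1 := by
    rw [cd_add_one a b (by omega)]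
    simp only [if_neg (show ¬ (b-a).val = n - 1 by omega)]
  have cdbm1 : ((b - 1) - a).val = (b - a).val - 1 := by
    rw [cd_sub_one a b (by omega)]
    simp only [if_neg (show ¬ (b-a).val = 0 by omega)]
  have hxb : (x - a).val ≠ (b - a).val := fun h => G.ne_of_adj hbx (cd_inj h).symm
  have hxbp : (x - a).val ≠ ((b+1) - a).val := cd_ne_of_ne hx1
  have hxa : (x - a).val ≠ 0 := by
    intro h; exact hx2 (cd_eq_zero_iff.mp h)
  have hxsb : ¬ (0 < (x - a).val ∧ (x - a).val < (b - a).val) := hx3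
  obtain ⟨hc0, hcl⟩ := hc
  have hxn := (x - a).isLt
  have hbn := (b - a).isLt
  rw [cdbp1] at hxbp
  have h00 : (a - a).val = 0 := cd_self a
  have d12 : (b + 1 : Fin n) ≠ b - 1 := ne_of_cd_ne (a := a) (by omega)
  have d13 : (b + 1 : Fin n) ≠ x := ne_of_cd_ne (a := a) (by omega)
  have d14 : (b + 1 : Fin n) ≠ a := ne_of_cd_ne (a := a) (by omega)
  have d15 : (b + 1 : Fin n) ≠ c := ne_of_cd_ne (a := a) (by omega)
  have d23 : (b - 1 : Fin n) ≠ x := ne_of_cd_ne (a := a) (by omega)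
  have d24 : (b - 1 : Fin n) ≠ a := ne_of_cd_ne (a := a) (by omega)
  have d25 : (b - 1 : Fin n) ≠ c := ne_of_cd_ne (a := a) (by omega)
  have d34 : x ≠ a := hx2
  have d35 : x ≠ c := ne_of_cd_ne (a := a) (by omega)
  have d45 : a ≠ c := ne_of_cd_ne (a := a) (by omega)
  exact five hdeg (hham b) ((adj_pred hham b).symm) hbx hab.symm hcb.symm
    d12 d13 d14 d15 d23 d24 d25 d34 d35 d45

include hn hham in
lemma cd_a1 (a : Fin n) : ((a + 1) - a).val = 1 := by
  rw [cd_add_one a a (by omega), cd_self]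
  simp only [if_neg (show ¬ (0:ℕ) = n - 1 by omega)]

include hn hham in
lemma cd_am1 (a : Fin n) : ((a - 1) - a).val = n - 1 := by
  rw [cd_sub_one a a (by omega), cd_self]; simp

include hn hham hnc hmax hdeg in
lemma walk : ∀ ℓ : ℕ, ∀ a b : Fin n, G.Adj a b → (b - a).val = ℓ → 1 ≤ ℓ → ℓ ≤ n - 2 →
    ((SatLow G a b → ∀ x y : Fin n, (x - a).val ≤ ℓ → (y - a).val ≤ ℓ →
        (G.Adj x y ↔ Pat ℓ (x - a).val (y - a).val)) ∧
     (SatHigh G a b → ∀ x y : Fin n, (x - a).val ≤ ℓ → (y - a).val ≤ ℓ →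
        (G.Adj x y ↔ Pat (ℓ - 1) (x - a).val (y - a).val))) := by
  intro ℓ
  induction ℓ using Nat.strong_induction_on with
  | _ ℓ IH =>
  intro a b hab hcd h1 h2
  by_cases hbase : ℓ = 1
  · -- base case
    subst hbase
    have hxid : ∀ x : Fin n, (x - a).val ≤ 1 → x = a ∨ x = b := by
      intro x hx
      rcases Nat.le_one_iff_eq_zero_or_eq_one.mp hx with h | h
      · exact Or.inl (cd_eq_zero_iff.mp h)
      · exact Or.inr (cd_inj (by rw [h, hcd]))
    refine ⟨?_, ?_⟩ <;>
    · intro _ x y hx hy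
      rcases hxid x hx with rfl | rfl <;> rcases hxid y hy with rfl | rfl
      · rw [cd_self]
        exact iff_of_false (by simp) (by unfold Pat; omega)
      · rw [cd_self, hcd]
        exact iff_of_true hab (Or.inl (Or.inl rfl))
      · rw [cd_self, hcd]
        exact iff_of_true hab.symm (Or.inl (Or.inr rfl))
      · rw [hcd]
        exact iff_of_false (by simp) (by unfold Pat; omega)
  · -- inductive step, ℓ ≥ 2
    have hl2 : 2 ≤ ℓ := by omega
    have hℓn : ℓ < n := hcd ▸ (b - a).isLt
    obtain ⟨c, hsb, hac, hcb⟩ := ex_triangle hn hham hnc hmax a b hab (by omega)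
    have h00 : (a - a).val = 0 := cd_self a
    have ha1 : ((a + 1) - a).val = 1 := cd_a1 hn hham a
    have ham1 : ((a - 1) - a).val = n - 1 := cd_am1 hn hham a
    have hbp1 : ((b + 1) - a).val = ℓ + 1 := by
      rw [cd_add_one a b (by omega), hcd, if_neg (by omega)]
    have hbm1 : ((b - 1) - a).val = ℓ - 1 := by
      rw [cd_sub_one a b (by omega), hcd, if_neg (by omega)]
    constructor
    · -- SatLow : conclusion Pat ℓ
      intro hSL x y hx hy
      have hc1 : (c - a).val = 1 :=
        low_only hn hham hdeg hab hSL (by omega) (by omega) hsb hac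
      have hcap : c = a + 1 := cd_inj (by rw [hc1, ha1])
      have hab1 : G.Adj (a + 1) b := hcap ▸ hcb
      have hcd1 : (b - (a + 1)).val = ℓ - 1 := by
        rw [cd_sub a (a+1) b, ha1, hcd, if_pos (by omega)]
      have haam1 : (a - (a + 1)).val = n - 1 := by
        rw [cd_sub a (a+1) a, ha1, cd_self, if_neg (by omega)]
        omega
      have hSH1 : SatHigh G (a+1) b := by
        refine ⟨a, hab.symm, ?_, ?_, ?_⟩
        · exact ne_of_cd_ne (a := a) (by omega)
        · exact ne_of_cd_ne (a := a) (by omega)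
        · intro hq; obtain ⟨q1, q2⟩ := hq; omega
      have EC := (IH (ℓ-1) (by omega) (a+1) b hab1 hcd1 (by omega) (by omega)).2 hSH1
      have shift : ∀ z : Fin n, 1 ≤ (z - a).val → (z - (a+1)).val = (z - a).val - 1 := by
        intro z hz
        rw [cd_sub a (a+1) z, ha1, if_pos hz]
      have key0 : ∀ y : Fin n, (y - a).val ≤ ℓ → (G.Adj a y ↔ Pat ℓ 0 (y - a).val) := by
        intro y hy
        constructor
        · intro hay
          have hyne : (y - a).val ≠ 0 := fun h => G.ne_of_adj hay (cd_eq_zero_iff.mp h).symm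
          by_cases hyl : (y - a).val = ℓ
          · exact Or.inr ⟨by omega, Or.inl (by omega)⟩
          · have := low_only hn hham hdeg hab hSL (by omega) (by omega)
              ⟨by omega, by omega⟩ hay
            exact Or.inl (Or.inl (by omega))
        · intro hp
          have hv : (y - a).val = 1 ∨ (y - a).val = ℓ := by
            have hyn := (y - a).isLt
            unfold Pat at hp; omega
          rcases hv with h | h
          · have hy1 : y = a + 1 := cd_inj (by rw [h, ha1])
            rw [hy1]; exact hham a
          · have hyb : y = b := cd_inj (by rw [h, hcd])
            rw [hyb]; exact hab
      rcases Nat.eq_zero_or_pos (x - a).val with hx0 | hxp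
      · have hxa : x = a := cd_eq_zero_iff.mp hx0
        rw [hxa, cd_self]
        exact key0 y hy
      rcases Nat.eq_zero_or_pos (y - a).val with hy0 | hyp
      · have hya : y = a := cd_eq_zero_iff.mp hy0
        rw [hya, cd_self]
        exact ((adj_comm G x a).trans (key0 x hx)).trans pat_comm
      · have hx' : (x - (a+1)).val ≤ ℓ - 1 := by rw [shift x hxp]; omega
        have hy' : (y - (a+1)).val ≤ ℓ - 1 := by rw [shift y hyp]; omega
        have hEC := EC x y hx' hy'
        rw [shift x hxp, shift y hyp] at hEC
        refine hEC.trans ?_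
        unfold Pat
        omega
    · -- SatHigh : conclusion Pat (ℓ - 1)
      intro hSH x y hx hy
      have hc1 : (c - a).val = ℓ - 1 := by
        have := high_only hn hham hdeg hab hSH (by omega) (by omega) hsb hcb
        rwa [hcd] at this
      have hcbm : c = b - 1 := cd_inj (by rw [hc1, hbm1])
      have hab1 : G.Adj a (b - 1) := hcbm ▸ hac
      have hSL1 : SatLow G a (b - 1) := by
        refine ⟨b, hab, ?_, ?_, ?_⟩
        · exact ne_of_cd_ne (a := a) (by omega)
        · exact ne_of_cd_ne (a := a) (by omega)
        · intro hq; obtain ⟨q1, q2⟩ := hq; omega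
      have EC := (IH (ℓ-1) (by omega) a (b-1) hab1 hbm1 (by omega) (by omega)).1 hSL1
      have keyb : ∀ x : Fin n, (x - a).val ≤ ℓ - 1 →
          (G.Adj x b ↔ Pat (ℓ-1) (x - a).val ℓ) := by
        intro x hx
        constructor
        · intro hxb'
          rcases Nat.eq_zero_or_pos (x - a).val with hx0 | hxp
          · exact Or.inr ⟨by omega, Or.inr (by omega)⟩
          · have := high_only hn hham hdeg hab hSH (by omega) (by omega)
              ⟨by omega, by omega⟩ hxb'
            rw [hcd] at this
            exact Or.inl (Or.inl (by omega))
        · intro hp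
          have hv : (x - a).val = 0 ∨ (x - a).val = ℓ - 1 := by
            unfold Pat at hp; omega
          rcases hv with h | h
          · have hxa : x = a := cd_eq_zero_iff.mp h
            rw [hxa]; exact hab
          · have hxbm : x = b - 1 := cd_inj (by rw [h, hbm1])
            rw [hxbm]; exact adj_pred hham b
      by_cases hxl : (x - a).val = ℓ
      · have hxb' : x = b := cd_inj (by rw [hxl, hcd])
        by_cases hyl : (y - a).val = ℓ
        · have hyb : y = b := cd_inj (by rw [hyl, hcd])
          rw [hxb', hyb, hcd]
          exact iff_of_false (by simp) (by unfold Pat; omega)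
        · rw [hxb', hcd]
          have := keyb y (by omega)
          exact ((adj_comm G b y).trans this).trans pat_comm
      · by_cases hyl : (y - a).val = ℓ
        · have hyb : y = b := cd_inj (by rw [hyl, hcd])
          rw [hyb, hcd]
          exact keyb x (by omega)
        · exact EC x y (by omega) (by omega)

def fI (n i : ℕ) : ℕ :=
  if i = 0 then 1 else if i = 1 then 2 else if i = 2 then 0
  else if i % 2 = 0 then n - (i - 2) / 2 else 3 + (i - 3) / 2

def fII (n i : ℕ) : ℕ :=
  if i = 0 then 1 else if i = 1 then 0
  else if i % 2 = 1 then n - (i - 1) / 2 else 2 + (i - 2) / 2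

def gI (n i : ℕ) : ℕ := if i % 2 = 0 then n - 3 - (i - 2) / 2 else (i - 3) / 2

def gII (n i : ℕ) : ℕ := if i % 2 = 1 then n - 2 - (i - 1) / 2 else (i - 2) / 2

omit [NeZero n] in
lemma fI_lt (hn : 7 ≤ n) {i : ℕ} (hi : i < n) : fI n i < n := by
  unfold fI; split_ifs <;> omega

omit [NeZero n] in
lemma fII_lt (hn : 7 ≤ n) {i : ℕ} (hi : i < n) : fII n i < n := by
  unfold fII; split_ifs <;> omega

omit [NeZero n] in
lemma fI_inj (hn : 7 ≤ n) {i j : ℕ} (hi : i < n) (hj : j < n) (h : fI n i = fI n j) :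
    i = j := by
  unfold fI at h; split_ifs at h <;> omega

omit [NeZero n] in
lemma fII_inj (hn : 7 ≤ n) {i j : ℕ} (hi : i < n) (hj : j < n) (h : fII n i = fII n j) :
    i = j := by
  unfold fII at h; split_ifs at h <;> omega

omit [NeZero n] in
lemma gI_glue (hn : 7 ≤ n) {i : ℕ} (h2 : 2 ≤ i) (hi : i < n) :
    (if 3 ≤ fI n i then fI n i - 3 else fI n i + n - 3) = gI n i ∧ gI n i ≤ n - 3 := by
  unfold fI gI; split_ifs <;> omega

omit [NeZero n] in
lemma gII_glue (hn : 7 ≤ n) {i : ℕ} (h2 : 2 ≤ i) (hi : i < n) :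
    (if 2 ≤ fII n i then fII n i - 2 else fII n i + n - 2) = gII n i ∧ gII n i ≤ n - 3 := by
  unfold fII gII; split_ifs <;> omega

omit [NeZero n] in
lemma patI_iff (hn : 7 ≤ n) {i j : ℕ} (h2 : 2 ≤ i) (hij : i < j) (hjn : j < n) :
    Pat (n - 4) (gI n i) (gI n j) ↔ j ≤ i + 2 := by
  unfold Pat gI; split_ifs <;> omega

omit [NeZero n] in
lemma patII_iff (hn : 7 ≤ n) {i j : ℕ} (h2 : 2 ≤ i) (hij : i < j) (hjn : j < n) :
    Pat (n - 3) (gII n i) (gII n j) ↔ j ≤ i + 2 := by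
  unfold Pat gII; split_ifs <;> omega

omit [NeZero n] in
lemma fI_small0 (hn : 7 ≤ n) {j : ℕ} (h1 : 1 ≤ j) (hj : j < n) :
    (fI n j = 0 ∨ fI n j = 2) ↔ (j = 1 ∨ j = 2) := by
  unfold fI; split_ifs <;> omega

omit [NeZero n] in
lemma fI_small1 (hn : 7 ≤ n) {j : ℕ} (h1 : 2 ≤ j) (hj : j < n) :
    (fI n j = 0 ∨ fI n j = 1 ∨ fI n j = 3) ↔ (j = 2 ∨ j = 3) := by
  unfold fI; split_ifs <;> omega

omit [NeZero n] in
lemma fII_small0 (hn : 7 ≤ n) {j : ℕ} (h1 : 1 ≤ j) (hj : j < n) :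
    (fII n j = 0 ∨ fII n j = 2) ↔ (j = 1 ∨ j = 2) := by
  unfold fII; split_ifs <;> omega

omit [NeZero n] in
lemma fII_small1 (hn : 7 ≤ n) {j : ℕ} (h1 : 2 ≤ j) (hj : j < n) :
    (fII n j = 1 ∨ fII n j = 2 ∨ fII n j = n - 1) ↔ (j = 2 ∨ j = 3) := by
  unfold fII; split_ifs <;> omega

include hn hham hnc in
lemma nbr1 (p q : Fin n) (hq : (q - p).val = 2) (h1 : G.Adj p q) :
    ∀ w z : Fin n, (w - p).val = 1 →
      (G.Adj w z ↔ ((z - p).val = 0 ∨ (z - p).val = 2)) := by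
  intro w z hw
  have hzn := (z - p).isLt
  constructor
  · intro hadj
    by_contra hcon
    push_neg at hcon
    obtain ⟨hz0, hz2⟩ := hcon
    have hz1 : (z - p).val ≠ 1 := fun h => G.ne_of_adj hadj (cd_inj (hw.trans h.symm))
    have e1 : (z - q).val = (z - p).val - 2 := by
      rw [cd_sub p q z, hq, if_pos (by omega)]
    have e2 : (p - q).val = n - 2 := by
      rw [cd_sub p q p, hq, cd_self, if_neg (by omega)]
      omega
    exact hnc p q w z h1 hadj ⟨sb (by omega) (by omega), sb (by omega) (by omega)⟩
  · intro h
    rcases h with h | h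
    · have hwm : w - 1 = p := cd_eq_zero_iff.mp (by
        rw [cd_sub_one p w (by omega), if_neg (by omega), hw])
      have := adj_pred hham w
      rw [hwm] at this
      rw [cd_eq_zero_iff.mp h]
      exact this.symm
    · have hwp : (w + 1 - p).val = 2 := by
        rw [cd_add_one p w (by omega), if_neg (by omega), hw]
      have hzq : z = w + 1 := cd_inj (h.trans hwp.symm)
      rw [hzq]
      exact hham w

include hn hham hnc in
lemma nbr2 (p q c : Fin n) (hq : (q - p).val = 2) (hc : (c - p).val = 3)
    (h1 : G.Adj p q) (h2 : G.Adj q c) (h3 : G.Adj c p) :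
    ∀ u z : Fin n, (u - p).val = 2 →
      (G.Adj u z ↔ ((z - p).val = 0 ∨ (z - p).val = 1 ∨ (z - p).val = 3)) := by
  intro u z hu
  have huq : u = q := cd_inj (hu.trans hq.symm)
  rw [huq]
  have hzn := (z - p).isLt
  constructor
  · intro hadj
    by_contra hcon
    push_neg at hcon
    obtain ⟨hz0, hz1, hz3⟩ := hcon
    have hz2 : (z - p).val ≠ 2 := fun h => G.ne_of_adj hadj (cd_inj (hq.trans h.symm))
    have e1 : (z - c).val = (z - p).val - 3 := by
      rw [cd_sub p c z, hc, if_pos (by omega)]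
    have e2 : (p - c).val = n - 3 := by
      rw [cd_sub p c p, hc, cd_self, if_neg (by omega)]
      omega
    exact hnc p c q z h3.symm hadj ⟨sb (by omega) (by omega), sb (by omega) (by omega)⟩
  · intro h
    rcases h with h | h | h
    · rw [cd_eq_zero_iff.mp h]
      exact h1.symm
    · have hqm : (q - 1 - p).val = 1 := by
        rw [cd_sub_one p q (by omega), if_neg (by omega), hq]
      have hzq : z = q - 1 := cd_inj (h.trans hqm.symm)
      rw [hzq]
      exact (adj_pred hham q).symm
    · have hzc : z = c := cd_inj (h.trans hc.symm)
      rw [hzc]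
      exact h2

include hn hham hnc in
lemma nbrP (p q c : Fin n) (hq : (q - p).val = 2) (hc : (c - p).val = n - 1)
    (h1 : G.Adj p q) (h2 : G.Adj q c) :
    ∀ z : Fin n, (G.Adj p z ↔
      ((z - p).val = 1 ∨ (z - p).val = 2 ∨ (z - p).val = n - 1)) := by
  intro z
  have hzn := (z - p).isLt
  constructor
  · intro hadj
    by_contra hcon
    push_neg at hcon
    obtain ⟨hz1, hz2, hzm⟩ := hcon
    have hz0 : (z - p).val ≠ 0 := fun h => G.ne_of_adj hadj (cd_eq_zero_iff.mp h).symm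
    have e1 : (p - c).val = 1 := by
      rw [cd_sub p c p, hc, cd_self, if_neg (by omega)]
      omega
    have e2 : (q - c).val = 3 := by
      rw [cd_sub p c q, hc, hq, if_neg (by omega)]
      omega
    have e3 : (z - q).val = (z - p).val - 2 := by
      rw [cd_sub p q z, hq, if_pos (by omega)]
    have e4 : (c - q).val = n - 3 := by
      rw [cd_sub p q c, hq, hc, if_pos (by omega)]
      omega
    exact hnc c q p z h2.symm hadj ⟨sb (by omega) (by omega), sb (by omega) (by omega)⟩
  · intro h
    rcases h with h | h | h
    · have : z = p + 1 := cd_inj (h.trans (cd_a1 hn hham p).symm)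
      rw [this]
      exact hham p
    · rw [cd_inj (h.trans hq.symm)]
      exact h1
    · have : z = p - 1 := cd_inj (h.trans (cd_am1 hn hham p).symm)
      rw [this]
      exact (adj_pred hham p).symm

omit [NeZero n] in
lemma tree_adj {i j : Fin n} :
    (linear2Tree n).Adj i j ↔ (i ≠ j ∧ i.val ≤ j.val + 2 ∧ j.val ≤ i.val + 2) := Iff.rfl

omit [NeZero n] in
lemma treelt {i j : Fin n} (h : i.val < j.val) :
    (linear2Tree n).Adj i j ↔ j.val ≤ i.val + 2 := by
  rw [tree_adj]
  constructor
  · exact fun hh => hh.2.2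
  · intro hh
    exact ⟨Fin.ne_of_val_ne (by omega), by omega, hh⟩

include hn hham hnc hmax hdeg in
lemma case_i (p q c : Fin n) (hq : (q - p).val = 2) (hc : (c - p).val = 3)
    (h1 : G.Adj p q) (h2 : G.Adj q c) (h3 : G.Adj c p) :
    Nonempty (G ≃g linear2Tree n) := by
  have hcp : (p - c).val = n - 3 := by
    rw [cd_sub p c p, hc, cd_self, if_neg (by omega)]
    omega
  have hqc : (q - c).val = n - 1 := by
    rw [cd_sub p c q, hc, hq, if_neg (by omega)]
    omega
  have hSH : SatHigh G c p := by
    refine ⟨q, h1, ?_, ?_, ?_⟩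
    · exact ne_of_cd_ne (a := p) (by rw [hq, cd_a1 hn hham p]; omega)
    · exact ne_of_cd_ne (a := p) (by rw [hq, hc]; omega)
    · intro hqq
      obtain ⟨u1, u2⟩ := hqq
      rw [hqc, hcp] at u2
      omega
  have EC := (walk hn hham hnc hmax hdeg (n-3) c p h3 hcp (by omega) (by omega)).2 hSH
  have hE : n - 3 - 1 = n - 4 := by omega
  rw [hE] at EC
  set w : Fin n → Fin n := fun i => p + ((fI n i.val : ℕ) : Fin n) with hwdef
  have hcdw : ∀ i : Fin n, (w i - p).val = fI n i.val := by
    intro i; exact cd_add_nat p _ (fI_lt hn i.isLt)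
  have hwinj : Function.Injective w := by
    intro i j hwij
    have h' : (w i - p).val = (w j - p).val := by rw [hwij]
    rw [hcdw, hcdw] at h'
    exact Fin.ext (fI_inj hn i.isLt j.isLt h')
  have harc : ∀ i : Fin n, 2 ≤ i.val → (w i - c).val = gI n i.val ∧ gI n i.val ≤ n - 3 := by
    intro i hi
    have hg := gI_glue hn hi i.isLt
    refine ⟨?_, hg.2⟩
    rw [cd_sub p c (w i), hc, hcdw]
    exact hg.1
  have key : ∀ i j : Fin n, i.val < j.val → (G.Adj (w i) (w j) ↔ j.val ≤ i.val + 2) := by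
    intro i j hij
    have hjn := j.isLt
    by_cases hi0 : i.val = 0
    · have hwi : (w i - p).val = 1 := by rw [hcdw]; simp [fI, hi0]
      rw [nbr1 hn hham hnc p q hq h1 (w i) (w j) hwi, hcdw,
        fI_small0 hn (by omega) hjn]
      omega
    by_cases hi1 : i.val = 1
    · have hwi : (w i - p).val = 2 := by rw [hcdw]; simp [fI, hi1]
      rw [nbr2 hn hham hnc p q c hq hc h1 h2 h3 (w i) (w j) hwi, hcdw,
        fI_small1 hn (by omega) hjn]
      omega
    · have hi2 : 2 ≤ i.val := by omega
      have hgi := harc i hi2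
      have hgj := harc j (by omega)
      have hEC := EC (w i) (w j) (by rw [hgi.1]; exact hgi.2) (by rw [hgj.1]; exact hgj.2)
      rw [hgi.1, hgj.1] at hEC
      exact hEC.trans (patI_iff hn hi2 hij hjn)
  have hbij : Function.Bijective w := Finite.injective_iff_bijective.mp hwinj
  refine ⟨SimpleGraph.Iso.symm ⟨Equiv.ofBijective w hbij, ?_⟩⟩
  intro i j
  show G.Adj (w i) (w j) ↔ (linear2Tree n).Adj i j
  rcases lt_trichotomy i.val j.val with hlt | heq | hgt
  · rw [key i j hlt, treelt hlt]
  · have hijeq : i = j := Fin.ext heq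
    rw [hijeq]
    exact iff_of_false (G.irrefl) ((linear2Tree n).irrefl)
  · rw [G.adj_comm, key j i hgt, (linear2Tree n).adj_comm, treelt hgt]

include hn hham hnc hmax hdeg in
lemma case_ii (p q c : Fin n) (hq : (q - p).val = 2) (hc : (c - p).val = n - 1)
    (h1 : G.Adj p q) (h2 : G.Adj q c) (h3 : G.Adj c p) :
    Nonempty (G ≃g linear2Tree n) := by
  have hqc' : (c - q).val = n - 3 := by
    rw [cd_sub p q c, hq, hc, if_pos (by omega)]
    omega
  have hpq' : (p - q).val = n - 2 := by
    rw [cd_sub p q p, hq, cd_self, if_neg (by omega)]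
    omega
  have hqm1 : (q - 1 - p).val = 1 := by
    rw [cd_sub_one p q (by omega), if_neg (by omega), hq]
  have hSL : SatLow G q c := by
    refine ⟨p, h1.symm, ?_, ?_, ?_⟩
    · exact ne_of_cd_ne (a := p) (by rw [cd_self, hqm1]; omega)
    · exact ne_of_cd_ne (a := p) (by rw [cd_self, hc]; omega)
    · intro hqq
      obtain ⟨u1, u2⟩ := hqq
      rw [hqc', hpq'] at u2
      omega
  have EC := (walk hn hham hnc hmax hdeg (n-3) q c h2 hqc' (by omega) (by omega)).1 hSL
  set w : Fin n → Fin n := fun i => p + ((fII n i.val : ℕ) : Fin n) with hwdef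
  have hcdw : ∀ i : Fin n, (w i - p).val = fII n i.val := by
    intro i; exact cd_add_nat p _ (fII_lt hn i.isLt)
  have hwinj : Function.Injective w := by
    intro i j hwij
    have h' : (w i - p).val = (w j - p).val := by rw [hwij]
    rw [hcdw, hcdw] at h'
    exact Fin.ext (fII_inj hn i.isLt j.isLt h')
  have harc : ∀ i : Fin n, 2 ≤ i.val → (w i - q).val = gII n i.val ∧ gII n i.val ≤ n - 3 := by
    intro i hi
    have hg := gII_glue hn hi i.isLt
    refine ⟨?_, hg.2⟩
    rw [cd_sub p q (w i), hq, hcdw]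
    exact hg.1
  have key : ∀ i j : Fin n, i.val < j.val → (G.Adj (w i) (w j) ↔ j.val ≤ i.val + 2) := by
    intro i j hij
    have hjn := j.isLt
    by_cases hi0 : i.val = 0
    · have hwi : (w i - p).val = 1 := by rw [hcdw]; simp [fII, hi0]
      rw [nbr1 hn hham hnc p q hq h1 (w i) (w j) hwi, hcdw,
        fII_small0 hn (by omega) hjn]
      omega
    by_cases hi1 : i.val = 1
    · have hwi : w i = p := cd_eq_zero_iff.mp (by rw [hcdw]; simp [fII, hi1])
      rw [hwi, nbrP hn hham hnc p q c hq hc h1 h2 (w j), hcdw,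
        fII_small1 hn (by omega) hjn]
      omega
    · have hi2 : 2 ≤ i.val := by omega
      have hgi := harc i hi2
      have hgj := harc j (by omega)
      have hEC := EC (w i) (w j) (by rw [hgi.1]; exact hgi.2) (by rw [hgj.1]; exact hgj.2)
      rw [hgi.1, hgj.1] at hEC
      exact hEC.trans (patII_iff hn hi2 hij hjn)
  have hbij : Function.Bijective w := Finite.injective_iff_bijective.mp hwinj
  refine ⟨SimpleGraph.Iso.symm ⟨Equiv.ofBijective w hbij, ?_⟩⟩
  intro i j
  show G.Adj (w i) (w j) ↔ (linear2Tree n).Adj i j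
  rcases lt_trichotomy i.val j.val with hlt | heq | hgt
  · rw [key i j hlt, treelt hlt]
  · have hijeq : i = j := Fin.ext heq
    rw [hijeq]
    exact iff_of_false (G.irrefl) ((linear2Tree n).irrefl)
  · rw [G.adj_comm, key j i hgt, (linear2Tree n).adj_comm, treelt hgt]

include hn hham hnc hmax hdeg in
lemma no_internal (p q c : Fin n) (hq : (q - p).val = 2)
    (h1 : G.Adj p q) (h2 : G.Adj q c) (h3 : G.Adj c p)
    (hm4 : 4 ≤ (c - p).val) (hmn : (c - p).val ≤ n - 2) : False := by
  have hcn := (c - p).isLt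
  have h00 : (p - p).val = 0 := cd_self p
  have hp1 : ((p + 1) - p).val = 1 := cd_a1 hn hham p
  have hpm1 : ((p - 1) - p).val = n - 1 := cd_am1 hn hham p
  have hq1 : ((q + 1) - p).val = 3 := by
    rw [cd_add_one p q (by omega), hq, if_neg (by omega)]
  have hqm1 : ((q - 1) - p).val = 1 := by
    rw [cd_sub_one p q (by omega), hq, if_neg (by omega)]
  have hcp1 : ((c + 1) - p).val = (c - p).val + 1 := by
    rw [cd_add_one p c (by omega), if_neg (by omega)]
  have hcm1 : ((c - 1) - p).val = (c - p).val - 1 := by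
    rw [cd_sub_one p c (by omega), if_neg (by omega)]
  have hqm1q : q - 1 = p + 1 := cd_inj (by rw [hqm1, hp1])
  -- triangle inside arc (q, c)
  have hqc : (c - q).val = (c - p).val - 2 := by
    rw [cd_sub p q c, hq, if_pos (by omega)]
  obtain ⟨d, hsbd, hqd, hdc⟩ := ex_triangle hn hham hnc hmax q c h2 (by omega)
  obtain ⟨hd1, hd2⟩ := hsbd
  rw [cd_sub p q d, hq] at hd1 hd2
  rw [hqc] at hd2
  have hdn := (d - p).isLt
  have hdrange : 2 < (d - p).val ∧ (d - p).val < (c - p).val := by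
    split at hd1 <;> split at hd2 <;> omega
  -- force d = q + 1
  have hd3 : (d - p).val = 3 := by
    by_contra hdne
    have aq1 : G.Adj q (p + 1) := by
      have := adj_pred hham q
      rw [hqm1q] at this
      exact this.symm
    exact five hdeg aq1 (hham q) h1.symm h2 hqd
      (ne_of_cd_ne (a := p) (by omega)) (ne_of_cd_ne (a := p) (by omega))
      (ne_of_cd_ne (a := p) (by omega)) (ne_of_cd_ne (a := p) (by omega))
      (ne_of_cd_ne (a := p) (by omega)) (ne_of_cd_ne (a := p) (by omega))
      (ne_of_cd_ne (a := p) (by omega)) (ne_of_cd_ne (a := p) (by omega))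
      (ne_of_cd_ne (a := p) (by omega)) (ne_of_cd_ne (a := p) (by omega))
  -- force d = c - 1, i.e. (c-p).val = 4
  have hm5 : (c - p).val = 4 := by
    by_contra hcne
    exact five hdeg (hham c) ((adj_pred hham c).symm) h3 h2.symm hdc.symm
      (ne_of_cd_ne (a := p) (by omega)) (ne_of_cd_ne (a := p) (by omega))
      (ne_of_cd_ne (a := p) (by omega)) (ne_of_cd_ne (a := p) (by omega))
      (ne_of_cd_ne (a := p) (by omega)) (ne_of_cd_ne (a := p) (by omega))
      (ne_of_cd_ne (a := p) (by omega)) (ne_of_cd_ne (a := p) (by omega))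
      (ne_of_cd_ne (a := p) (by omega)) (ne_of_cd_ne (a := p) (by omega))
  -- triangle inside arc (c, p)
  have hcp : (p - c).val = n - 4 := by
    rw [cd_sub p c p, cd_self, if_neg (by omega)]
    omega
  obtain ⟨e, hsbe, hce, hep⟩ := ex_triangle hn hham hnc hmax c p h3 (by omega)
  obtain ⟨he1, he2⟩ := hsbe
  rw [cd_sub p c e] at he1 he2
  rw [hcp] at he2
  have hen := (e - p).isLt
  have herange : 4 < (e - p).val ∧ (e - p).val < n - 1 + 1 := by
    constructor
    · split at he1 <;> split at he2 <;> omega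
    · omega
  -- force e = c + 1
  have he5 : (e - p).val = 5 := by
    by_contra hene
    exact five hdeg (hham c) ((adj_pred hham c).symm) h3 h2.symm hce
      (ne_of_cd_ne (a := p) (by omega)) (ne_of_cd_ne (a := p) (by omega))
      (ne_of_cd_ne (a := p) (by omega)) (ne_of_cd_ne (a := p) (by omega))
      (ne_of_cd_ne (a := p) (by omega)) (ne_of_cd_ne (a := p) (by omega))
      (ne_of_cd_ne (a := p) (by omega)) (ne_of_cd_ne (a := p) (by omega))
      (ne_of_cd_ne (a := p) (by omega)) (ne_of_cd_ne (a := p) (by omega))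
  -- five at p
  exact five hdeg (hham p) ((adj_pred hham p).symm) h1 h3.symm hep.symm
    (ne_of_cd_ne (a := p) (by omega)) (ne_of_cd_ne (a := p) (by omega))
    (ne_of_cd_ne (a := p) (by omega)) (ne_of_cd_ne (a := p) (by omega))
    (ne_of_cd_ne (a := p) (by omega)) (ne_of_cd_ne (a := p) (by omega))
    (ne_of_cd_ne (a := p) (by omega)) (ne_of_cd_ne (a := p) (by omega))
    (ne_of_cd_ne (a := p) (by omega)) (ne_of_cd_ne (a := p) (by omega))

include hn hham hnc hmax in
lemma ear_exists : ∃ p q : Fin n, G.Adj p q ∧ (q - p).val = 2 := by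
  classical
  set CH := Finset.univ.filter
    (fun pr : Fin n × Fin n => G.Adj pr.1 pr.2 ∧ 2 ≤ (pr.2 - pr.1).val ∧
      (pr.2 - pr.1).val ≤ n - 2) with hCH
  have hne : CH.Nonempty := by
    have h2n : (2 : ℕ) < n := by omega
    obtain ⟨z0, -⟩ : ∃ z : Fin n, True := ⟨0, trivial⟩
    obtain ⟨z2, hcd2⟩ : ∃ z2 : Fin n, (z2 - z0).val = 2 :=
      ⟨_, cd_add_nat z0 2 h2n⟩
    by_cases hadj : G.Adj z0 z2
    · refine ⟨(z0, z2), ?_⟩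
      simp only [hCH, Finset.mem_filter, Finset.mem_univ, true_and]
      exact ⟨hadj, by omega, by omega⟩
    · obtain ⟨e, f, hef, hcr1, hcr2⟩ := hmax z0 z2
        (ne_of_cd_ne (a := z0) (by rw [cd_self, hcd2]; omega)).symm hadj
      obtain ⟨g1, g2⟩ := hcr1
      obtain ⟨g3, g4⟩ := hcr2
      rw [hcd2] at g2
      have he1 : (e - z0).val = 1 := by omega
      rw [cd_sub z0 z2 f] at g3 g4
      rw [cd_sub z0 z2 z0, cd_self, hcd2] at g4
      rw [hcd2] at g3
      rw [if_neg (show ¬(2:ℕ) ≤ 0 by omega)] at g4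
      have hfn := (f - z0).isLt
      have hf3 : 3 ≤ (f - z0).val := by
        split at g3 <;> split at g4 <;> omega
      have hfe : (f - e).val = (f - z0).val - 1 := by
        rw [cd_sub z0 e f, he1, if_pos (by omega)]
      refine ⟨(e, f), ?_⟩
      simp only [hCH, Finset.mem_filter, Finset.mem_univ, true_and]
      refine ⟨hef, by omega, by omega⟩
  obtain ⟨pr, hmem, hmin⟩ := Finset.exists_min_image CH (fun pr => (pr.2 - pr.1).val) hne
  simp only [hCH, Finset.mem_filter, Finset.mem_univ, true_and] at hmem
  obtain ⟨hadj, hlow, hhigh⟩ := hmem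
  by_cases hl2 : (pr.2 - pr.1).val = 2
  · exact ⟨pr.1, pr.2, hadj, hl2⟩
  exfalso
  obtain ⟨c, hsb, hc1, hc2⟩ := ex_triangle hn hham hnc hmax pr.1 pr.2 hadj (by omega)
  obtain ⟨hb1, hb2⟩ := hsb
  have hcn := (c - pr.1).isLt
  by_cases hcc : 2 ≤ (c - pr.1).val
  · have : (pr.1, c) ∈ CH := by
      simp only [hCH, Finset.mem_filter, Finset.mem_univ, true_and]
      exact ⟨hc1, hcc, by omega⟩
    have := hmin _ this
    simp only at this
    omega
  · have hcval : (c - pr.1).val = 1 := by omega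
    have h2c : (pr.2 - c).val = (pr.2 - pr.1).val - 1 := by
      rw [cd_sub pr.1 c pr.2, hcval, if_pos (by omega)]
    have : (c, pr.2) ∈ CH := by
      simp only [hCH, Finset.mem_filter, Finset.mem_univ, true_and]
      exact ⟨hc2, by omega, by omega⟩
    have := hmin _ this
    simp only at this
    omega

include hn hham hnc hmax hdeg in
lemma forward : Nonempty (G ≃g linear2Tree n) := by
  obtain ⟨p, q, h1, hq⟩ := ear_exists hn hham hnc hmax
  have hqp : (p - q).val = n - 2 := by
    rw [cd_sub p q p, hq, cd_self, if_neg (by omega)]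
    omega
  obtain ⟨c, hsb, hqc, hcp⟩ := ex_triangle hn hham hnc hmax q p h1.symm (by omega)
  obtain ⟨hb1, hb2⟩ := hsb
  rw [cd_sub p q c, hq] at hb1 hb2
  rw [hqp] at hb2
  have hcn := (c - p).isLt
  have hcr : 3 ≤ (c - p).val ∧ (c - p).val ≤ n - 1 := by
    split at hb1 <;> split at hb2 <;> omega
  by_cases hc3 : (c - p).val = 3
  · exact case_i hn hham hnc hmax hdeg p q c hq hc3 h1 hqc hcp
  by_cases hcm : (c - p).val = n - 1
  · exact case_ii hn hham hnc hmax hdeg p q c hq hcm h1 hqc hcp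
  · exact absurd (no_internal hn hham hnc hmax hdeg p q c hq h1 hqc hcp
      (by omega) (by omega)) not_false

end walkSec

lemma maxDeg_eq_of_iso {G H : SimpleGraph (Fin n)} (e : G ≃g H) : maxDeg G = maxDeg H := by
  have hdeg : ∀ v, degSet G v = degSet H (e v) := by
    intro v
    have himg : H.neighborSet (e v) = (fun x => e x) '' G.neighborSet v := by
      ext w
      simp only [SimpleGraph.mem_neighborSet, Set.mem_image]
      constructor
      · intro h
        refine ⟨e.symm w, ?_, by simp⟩
        have : H.Adj (e v) (e (e.symm w)) := by simpa using h
        exact e.map_rel_iff.mp this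
      · rintro ⟨u, hu, rfl⟩
        exact e.map_rel_iff.mpr hu
    rw [degSet, degSet, himg]
    exact (Set.ncard_image_of_injective _
      (fun a b hab => e.toEquiv.injective hab)).symm
  apply le_antisymm
  · apply Finset.sup_le
    intro v _
    rw [hdeg v]
    exact Finset.le_sup (Finset.mem_univ (e v))
  · apply Finset.sup_le
    intro w _
    have : degSet H w = degSet G (e.symm w) := by
      rw [hdeg (e.symm w)]
      simp
    rw [this]
    exact Finset.le_sup (Finset.mem_univ (e.symm w))

lemma tree_deg_le (hn : 7 ≤ n) (v : Fin n) : degSet (linear2Tree n) v ≤ 4 := by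
  have hsub : (linear2Tree n).neighborSet v ⊆
      (fun t : ℕ => (t : Fin n)) '' {v.val - 2, v.val - 1, v.val + 1, v.val + 2} := by
    intro j hj
    rw [SimpleGraph.mem_neighborSet, tree_adj] at hj
    obtain ⟨hne, hj1, hj2⟩ := hj
    have hvne : j.val ≠ v.val := fun h => hne (Fin.ext h.symm)
    refine ⟨j.val, ?_, Fin.cast_val_eq_self j⟩
    simp only [Set.mem_insert_iff, Set.mem_singleton_iff]
    omega
  calc degSet (linear2Tree n) v
      ≤ ((fun t : ℕ => (t : Fin n)) ''
        {v.val - 2, v.val - 1, v.val + 1, v.val + 2}).ncard :=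
        Set.ncard_le_ncard hsub (Set.toFinite _)
    _ ≤ ({v.val - 2, v.val - 1, v.val + 1, v.val + 2} : Set ℕ).ncard :=
        Set.ncard_image_le (Set.toFinite _)
    _ ≤ 4 := by
        refine le_trans (Set.ncard_insert_le _ _) ?_
        refine Nat.succ_le_succ ?_
        refine le_trans (Set.ncard_insert_le _ _) ?_
        refine Nat.succ_le_succ ?_
        refine le_trans (Set.ncard_insert_le _ _) ?_
        refine Nat.succ_le_succ ?_
        simp [Set.ncard_singleton]

lemma tree_deg_four (hn : 7 ≤ n) :
    degSet (linear2Tree n) (⟨2, by omega⟩ : Fin n) = 4 := by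
  have hset : (linear2Tree n).neighborSet (⟨2, by omega⟩ : Fin n) =
      ↑({⟨0, by omega⟩, ⟨1, by omega⟩, ⟨3, by omega⟩, ⟨4, by omega⟩} : Finset (Fin n)) := by
    ext j
    rw [SimpleGraph.mem_neighborSet, tree_adj]
    simp only [Finset.coe_insert, Set.mem_insert_iff, Finset.coe_singleton,
      Set.mem_singleton_iff, Fin.ext_iff, Ne]
    omega
  rw [degSet, hset, Set.ncard_coe_finset]
  rw [Finset.card_insert_of_notMem (by norm_num [Fin.ext_iff]),
    Finset.card_insert_of_notMem (by norm_num [Fin.ext_iff]),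
    Finset.card_insert_of_notMem (by norm_num [Fin.ext_iff]),
    Finset.card_singleton]

lemma maxDeg_tree (hn : 7 ≤ n) : maxDeg (linear2Tree n) = 4 := by
  apply le_antisymm
  · exact Finset.sup_le (fun v _ => tree_deg_le hn v)
  · rw [← tree_deg_four hn]
    exact Finset.le_sup (Finset.mem_univ _)

end Stmt10

/-- A maximal outerplanar graph of order `n ≥ 7` has maximum
degree 4 if and only if it is isomorphic to the straight linear 2-tree. -/
theorem stmt_10 (n : ℕ) [NeZero n] (hn : 7 ≤ n) (G : SimpleGraph (Fin n))
    (hG : IsMOPFin n G) :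
    maxDeg G = 4 ↔ Nonempty (G ≃g linear2Tree n) := by
  obtain ⟨h3, hham, hnc, hmax⟩ := hG
  constructor
  · intro hdeg
    exact Stmt10.forward hn hham hnc hmax (le_of_eq hdeg)
  · rintro ⟨e⟩
    rw [Stmt10.maxDeg_eq_of_iso e, Stmt10.maxDeg_tree hn]
end
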